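/- arXiv:2512.00693 — 9 statements merged into one kernel-verified Lean document; each statement's English description precedes it below -/
import Mathlib

section
/- Let μ > 0 and c ∈ ℝ with c ≠ 0, and set s = (c + √(c² + 4μ))/2. Then s − max(c, 0) = 2μ/(√(c² + 4μ) + |c|), and in particular 0 < s − max(c, 0) ≤ min{μ/|c|, √μ}. -/
/-- For `μ > 0` and `c ≠ 0`, with `s = (c + √(c² + 4μ))/2`:
`s − max(c,0) = 2μ/(√(c² + 4μ) + |c|)` and `0 < s − max(c,0) ≤ min{μ/|c|, √μ}`. -/
theorem stmt1 (μ c : ℝ) (hμ : 0 < μ) (hc : c ≠ 0) :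
    (c + Real.sqrt (c ^ 2 + 4 * μ)) / 2 - max c 0
        = 2 * μ / (Real.sqrt (c ^ 2 + 4 * μ) + |c|) ∧
    0 < (c + Real.sqrt (c ^ 2 + 4 * μ)) / 2 - max c 0 ∧
    (c + Real.sqrt (c ^ 2 + 4 * μ)) / 2 - max c 0 ≤ min (μ / |c|) (Real.sqrt μ) := by
  set r := Real.sqrt (c ^ 2 + 4 * μ) with hr
  have habs : 0 < |c| := abs_pos.mpr hc
  have hsq : 0 ≤ c ^ 2 + 4 * μ := by positivity
  have hr2 : r ^ 2 = c ^ 2 + 4 * μ := Real.sq_sqrt hsq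
  have hrgt : |c| < r := by
    have : |c| ^ 2 < r ^ 2 := by rw [hr2, sq_abs]; linarith
    have hrpos : 0 ≤ r := Real.sqrt_nonneg _
    nlinarith
  have hrpos : 0 < r := lt_of_le_of_lt (abs_nonneg c) hrgt
  have hmax : max c 0 = (c + |c|) / 2 := by
    rcases le_or_gt c 0 with h | h
    · rw [max_eq_right h, abs_of_nonpos h]; ring
    · rw [max_eq_left h.le, abs_of_pos h]; ring
  have key : (c + r) / 2 - max c 0 = (r - |c|) / 2 := by rw [hmax]; ring
  have hdenom : 0 < r + |c| := by linarith
  have heq : (c + r) / 2 - max c 0 = 2 * μ / (r + |c|) := by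
    rw [key]
    field_simp
    nlinarith [sq_abs c]
  refine ⟨heq, ?_, ?_⟩
  · rw [key]; linarith
  · have h2mu : 2 * Real.sqrt μ ≤ r := by
      rw [hr]
      have : 2 * Real.sqrt μ = Real.sqrt (4 * μ) := by
        rw [show (4:ℝ) * μ = 2^2 * μ by ring, Real.sqrt_mul (by positivity),
          Real.sqrt_sq (by norm_num)]
      rw [this]
      exact Real.sqrt_le_sqrt (by nlinarith)
    have hsμ : 0 < Real.sqrt μ := Real.sqrt_pos.mpr hμ
    rw [heq, le_min_iff]
    constructor
    · rw [div_le_div_iff₀ hdenom habs]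
      nlinarith
    · rw [div_le_iff₀ hdenom]
      nlinarith [Real.sq_sqrt hμ.le, abs_nonneg c]
end

section
/- For every μ > 0 and every c ∈ ℝⁿ (n ≥ 2), the function f_μ(s) = (1/2)‖s − c‖² − (μ/2) log(s₀² − ‖s₁‖²), defined for s = (s₀, s₁) in the interior of the second-order cone K_soc^n, has a unique minimizer. -/
/-- The smoothing objective for the second-order cone `K_soc^{p+1}`:
`f_μ(s) = (1/2)‖s − c‖² − (μ/2) log(s₀² − ‖s₁‖²)`, where a point of `ℝⁿ`
(`n = p + 1`) is represented as a pair `(s₀, s₁) ∈ ℝ × ℝᵖ` and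
`‖s − c‖² = (s₀ − c₀)² + ‖s₁ − c₁‖²` is the Euclidean norm squared. -/
noncomputable def socObj (p : ℕ) (μ : ℝ) (c s : ℝ × EuclideanSpace ℝ (Fin p)) : ℝ :=
  (1 / 2) * ((s.1 - c.1) ^ 2 + ‖s.2 - c.2‖ ^ 2) - (μ / 2) * Real.log (s.1 ^ 2 - ‖s.2‖ ^ 2)

set_option maxHeartbeats 1000000


/-- Lorentz Cauchy–Schwarz: for points in the interior of the second-order cone. -/
lemma soc_lorentz {p : ℕ} (x1 y1 : ℝ) (x2 y2 : EuclideanSpace ℝ (Fin p))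
    (hx : ‖x2‖ < x1) (hy : ‖y2‖ < y1) :
    Real.sqrt ((x1 ^ 2 - ‖x2‖ ^ 2) * (y1 ^ 2 - ‖y2‖ ^ 2)) ≤ x1 * y1 - inner ℝ x2 y2 := by
  have ha : (0:ℝ) ≤ ‖x2‖ := norm_nonneg _
  have hb : (0:ℝ) ≤ ‖y2‖ := norm_nonneg _
  have hi : (inner ℝ x2 y2 : ℝ) ≤ ‖x2‖ * ‖y2‖ := real_inner_le_norm x2 y2
  have h1 : (x1 ^ 2 - ‖x2‖ ^ 2) * (y1 ^ 2 - ‖y2‖ ^ 2) ≤ (x1 * y1 - ‖x2‖ * ‖y2‖) ^ 2 := by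
    nlinarith [sq_nonneg (x1 * ‖y2‖ - y1 * ‖x2‖)]
  calc Real.sqrt ((x1 ^ 2 - ‖x2‖ ^ 2) * (y1 ^ 2 - ‖y2‖ ^ 2))
      ≤ Real.sqrt ((x1 * y1 - ‖x2‖ * ‖y2‖) ^ 2) := Real.sqrt_le_sqrt h1
    _ = x1 * y1 - ‖x2‖ * ‖y2‖ := by
        rw [Real.sqrt_sq (by nlinarith)]
    _ ≤ x1 * y1 - inner ℝ x2 y2 := by linarith

/-- Strict midpoint convexity of the smoothing objective on the interior of the cone. -/
lemma soc_midpoint_lt {p : ℕ} (μ : ℝ) (hμ : 0 < μ) (c x y : ℝ × EuclideanSpace ℝ (Fin p))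
    (hx : ‖x.2‖ < x.1) (hy : ‖y.2‖ < y.1) (hne : x ≠ y) :
    socObj p μ c ((x.1 + y.1) / 2, (2⁻¹ : ℝ) • (x.2 + y.2))
      < (socObj p μ c x + socObj p μ c y) / 2 := by
  have hx2 : (0:ℝ) ≤ ‖x.2‖ := norm_nonneg _
  have hy2 : (0:ℝ) ≤ ‖y.2‖ := norm_nonneg _
  have hAx : 0 < x.1 ^ 2 - ‖x.2‖ ^ 2 := by nlinarith
  have hAy : 0 < y.1 ^ 2 - ‖y.2‖ ^ 2 := by nlinarith
  set Ax : ℝ := x.1 ^ 2 - ‖x.2‖ ^ 2 with hAxdef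
  set Ay : ℝ := y.1 ^ 2 - ‖y.2‖ ^ 2 with hAydef
  -- the quadratic part
  have hnorm_m : ‖(2⁻¹ : ℝ) • (x.2 + y.2) - c.2‖ ^ 2
      = (1/4) * (‖x.2 - c.2‖ ^ 2 + 2 * inner ℝ (x.2 - c.2) (y.2 - c.2) + ‖y.2 - c.2‖ ^ 2) := by
    have h1 : (2⁻¹ : ℝ) • (x.2 + y.2) - c.2 = (2⁻¹ : ℝ) • ((x.2 - c.2) + (y.2 - c.2)) := by
      rw [smul_add, smul_add]; module
    rw [h1, norm_smul, mul_pow, norm_add_sq_real]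
    norm_num
  have hsub : ‖x.2 - y.2‖ ^ 2
      = ‖x.2 - c.2‖ ^ 2 - 2 * inner ℝ (x.2 - c.2) (y.2 - c.2) + ‖y.2 - c.2‖ ^ 2 := by
    have h1 : x.2 - y.2 = (x.2 - c.2) - (y.2 - c.2) := by abel
    rw [h1, norm_sub_sq_real]
  have hq : (1/2 : ℝ) * (((x.1 + y.1)/2 - c.1) ^ 2 + ‖(2⁻¹ : ℝ) • (x.2 + y.2) - c.2‖ ^ 2)
      = ((1/2) * ((x.1 - c.1) ^ 2 + ‖x.2 - c.2‖ ^ 2)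
          + (1/2) * ((y.1 - c.1) ^ 2 + ‖y.2 - c.2‖ ^ 2)) / 2
        - (1/8) * ((x.1 - y.1) ^ 2 + ‖x.2 - y.2‖ ^ 2) := by
    rw [hnorm_m, hsub]; ring
  -- strict positivity of the gap
  have hD : 0 < (x.1 - y.1) ^ 2 + ‖x.2 - y.2‖ ^ 2 := by
    rcases eq_or_ne x.1 y.1 with h1 | h1
    · have h2 : x.2 ≠ y.2 := fun h2 => hne (Prod.ext h1 h2)
      have : 0 < ‖x.2 - y.2‖ := norm_pos_iff.mpr (sub_ne_zero.mpr h2)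
      nlinarith
    · have h3 : x.1 - y.1 ≠ 0 := sub_ne_zero.mpr h1
      have : 0 < (x.1 - y.1) ^ 2 := by positivity
      nlinarith [sq_nonneg ‖x.2 - y.2‖]
  -- the log part
  have hAmkey : Real.sqrt (Ax * Ay)
      ≤ ((x.1 + y.1) / 2) ^ 2 - ‖(2⁻¹ : ℝ) • (x.2 + y.2)‖ ^ 2 := by
    have hCS := soc_lorentz x.1 y.1 x.2 y.2 hx hy
    have hadd : ‖x.2 + y.2‖ ^ 2 = ‖x.2‖ ^ 2 + 2 * inner ℝ x.2 y.2 + ‖y.2‖ ^ 2 :=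
      norm_add_sq_real x.2 y.2
    have hsm : ‖(2⁻¹ : ℝ) • (x.2 + y.2)‖ ^ 2 = (1/4) * ‖x.2 + y.2‖ ^ 2 := by
      rw [norm_smul, mul_pow]; norm_num
    have hmul : Real.sqrt (Ax * Ay) = Real.sqrt Ax * Real.sqrt Ay :=
      Real.sqrt_mul hAx.le _
    have h2 : 2 * Real.sqrt (Ax * Ay) ≤ Ax + Ay := by
      nlinarith [sq_nonneg (Real.sqrt Ax - Real.sqrt Ay), Real.sq_sqrt hAx.le,
        Real.sq_sqrt hAy.le]
    rw [hsm]
    nlinarith [hCS, hadd]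
  have hsqrtpos : 0 < Real.sqrt (Ax * Ay) := Real.sqrt_pos.mpr (mul_pos hAx hAy)
  have hlog : (Real.log Ax + Real.log Ay) / 2
      ≤ Real.log (((x.1 + y.1) / 2) ^ 2 - ‖(2⁻¹ : ℝ) • (x.2 + y.2)‖ ^ 2) := by
    calc (Real.log Ax + Real.log Ay) / 2 = Real.log (Ax * Ay) / 2 := by
          rw [Real.log_mul hAx.ne' hAy.ne']
      _ = Real.log (Real.sqrt (Ax * Ay)) := (Real.log_sqrt (by positivity)).symm
      _ ≤ _ := Real.log_le_log hsqrtpos hAmkey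
  simp only [socObj]
  nlinarith [mul_le_mul_of_nonneg_left hlog (le_of_lt (half_pos hμ))]


/-- For every `μ > 0` and `c ∈ ℝⁿ` (`n = p + 1 ≥ 2`), the function
`f_μ(s) = (1/2)‖s − c‖² − (μ/2) log(s₀² − ‖s₁‖²)`, defined for `s = (s₀, s₁)` in the
interior of the second-order cone (i.e. `‖s₁‖ < s₀`), has a unique minimizer. -/

theorem stmt2 (p : ℕ) (hp : 1 ≤ p) (μ : ℝ) (hμ : 0 < μ)
    (c : ℝ × EuclideanSpace ℝ (Fin p)) :
    ∃! s0 : ℝ × EuclideanSpace ℝ (Fin p),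
      ‖s0.2‖ < s0.1 ∧
      ∀ s : ℝ × EuclideanSpace ℝ (Fin p), ‖s.2‖ < s.1 →
        socObj p μ c s0 ≤ socObj p μ c s := by
  classical
  set f : ℝ × EuclideanSpace ℝ (Fin p) → ℝ := socObj p μ c with hfdef
  set M : ℝ := f (1, 0) with hMdef
  set δ : ℝ := Real.exp (-(2 * M / μ)) with hδdef
  have hδpos : 0 < δ := Real.exp_pos _
  set A : ℝ × EuclideanSpace ℝ (Fin p) → ℝ := fun s => s.1 ^ 2 - ‖s.2‖ ^ 2 with hAdef
  have hAcont : Continuous A :=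
    (continuous_fst.pow 2).sub ((continuous_norm.comp continuous_snd).pow 2)
  -- the modified (globally continuous) objective
  set fbar : ℝ × EuclideanSpace ℝ (Fin p) → ℝ := fun s =>
    (1 / 2) * ((s.1 - c.1) ^ 2 + ‖s.2 - c.2‖ ^ 2) - (μ / 2) * Real.log (max (A s) δ)
    with hfbardef
  have hfbarcont : Continuous fbar := by
    apply Continuous.sub
    · apply continuous_const.mul
      exact ((continuous_fst.sub continuous_const).pow 2).add
        (((continuous_snd.sub continuous_const).norm).pow 2)
    · apply continuous_const.mul
      apply Continuous.log (hAcont.max continuous_const)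
      intro s
      exact ne_of_gt (lt_of_lt_of_le hδpos (le_max_right _ _))
  -- f and fbar agree where δ ≤ A
  have hfeq : ∀ s, δ ≤ A s → f s = fbar s := by
    intro s hs
    simp only [hfdef, hfbardef, socObj, max_eq_left hs, hAdef]
    rw [max_eq_left (by simpa [hAdef] using hs)]
  -- the sublevel set
  set S : Set (ℝ × EuclideanSpace ℝ (Fin p)) :=
    {s | ‖s.2‖ < s.1 ∧ f s ≤ M} with hSdef
  have hmemS : ∀ s, s ∈ S ↔ (‖s.2‖ < s.1 ∧ f s ≤ M) := fun s => Iff.rfl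
  -- membership facts
  have hApos : ∀ s : ℝ × EuclideanSpace ℝ (Fin p), ‖s.2‖ < s.1 → 0 < A s := by
    intro s hs
    have := norm_nonneg s.2
    simp only [hAdef]
    nlinarith
  have hδleA : ∀ s ∈ S, δ ≤ A s := by
    rintro s ⟨hs1, hs2⟩
    have hA := hApos s hs1
    have hg : 0 ≤ (1 / 2) * ((s.1 - c.1) ^ 2 + ‖s.2 - c.2‖ ^ 2) := by positivity
    have hlogA : -(2 * M / μ) ≤ Real.log (A s) := by
      have h5 : -(μ / 2) * Real.log (A s) ≤ M := by
        simp only [hfdef, socObj] at hs2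
        simp only [hAdef]
        nlinarith
      rw [show -(2 * M / μ) = (-(2 * M)) / μ by ring, div_le_iff₀ hμ]
      nlinarith
    calc δ = Real.exp (-(2 * M / μ)) := hδdef
      _ ≤ Real.exp (Real.log (A s)) := Real.exp_le_exp.mpr hlogA
      _ = A s := Real.exp_log hA
  -- S is closed
  have hSclosed : IsClosed S := by
    have hSeq : S = {s | ‖s.2‖ ≤ s.1} ∩ A ⁻¹' (Set.Ici δ) ∩ {s | fbar s ≤ M} := by
      ext s
      constructor
      · intro hs
        have h1 := hs.1
        have h2 := hs.2
        have h3 := hδleA s hs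
        refine ⟨⟨le_of_lt h1, h3⟩, ?_⟩
        show fbar s ≤ M
        rw [← hfeq s h3]; exact h2
      · rintro ⟨⟨h1, h2⟩, h3⟩
        simp only [Set.mem_setOf_eq, Set.mem_preimage, Set.mem_Ici] at h1 h2 h3
        have hA : 0 < A s := lt_of_lt_of_le hδpos h2
        have hstrict : ‖s.2‖ < s.1 := by
          simp only [hAdef] at hA
          nlinarith [norm_nonneg s.2]
        exact ⟨hstrict, by rw [hfeq s h2]; exact h3⟩
    rw [hSeq]
    exact ((isClosed_le (continuous_norm.comp continuous_snd) continuous_fst).inter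
      (isClosed_Ici.preimage hAcont)).inter (isClosed_le hfbarcont continuous_const)
  -- S is bounded
  have hSbounded : Bornology.IsBounded S := by
    set C : ℝ := 2 * M + 2 * μ * |c.1| + μ ^ 2 with hCdef
    set C2 : ℝ := 2 * M + 2 * μ * |c.1| + 2 * μ * (μ + Real.sqrt C) with hC2def
    have hsub : S ⊆ Metric.closedBall c (max (μ + Real.sqrt C) (Real.sqrt C2)) := by
      rintro s ⟨hs1, hs2⟩
      have h0 : (0:ℝ) ≤ ‖s.2‖ := norm_nonneg _
      have hs1pos : 0 < s.1 := lt_of_le_of_lt h0 hs1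
      have hA : 0 < A s := hApos s hs1
      have hlogA : Real.log (A s) ≤ 2 * s.1 := by
        have e1 : Real.log (A s) ≤ Real.log (s.1 ^ 2) := by
          apply Real.log_le_log hA
          simp only [hAdef]
          nlinarith
        have e2 : Real.log (s.1 ^ 2) = 2 * Real.log s.1 := by
          rw [Real.log_pow]; norm_num
        have e3 : Real.log s.1 ≤ s.1 - 1 := Real.log_le_sub_one_of_pos hs1pos
        linarith
      have hmain : (s.1 - c.1) ^ 2 + ‖s.2 - c.2‖ ^ 2 ≤ 2 * M + 2 * μ * s.1 := by
        simp only [hfdef, socObj, hAdef] at hs2 hlogA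
        nlinarith
      have ht : |s.1 - c.1| ≤ μ + Real.sqrt C := by
        have h1 : (|s.1 - c.1| - μ) ^ 2 ≤ C := by
          have habs : s.1 ≤ |c.1| + |s.1 - c.1| := by
            have := abs_sub_abs_le_abs_sub s.1 c.1
            cases abs_cases s.1 with
            | inl h => cases abs_cases c.1 with
              | inl h' => nlinarith [le_abs_self (s.1 - c.1)]
              | inr h' => nlinarith [le_abs_self (s.1 - c.1)]
            | inr h => nlinarith
          nlinarith [sq_abs (s.1 - c.1), abs_nonneg (s.1 - c.1),
            norm_nonneg (s.2 - c.2), sq_nonneg ‖s.2 - c.2‖]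
        have h2 := Real.sqrt_le_sqrt h1
        rw [Real.sqrt_sq_eq_abs] at h2
        have h3 := le_abs_self (|s.1 - c.1| - μ)
        linarith
      have hu : ‖s.2 - c.2‖ ≤ Real.sqrt C2 := by
        have h1 : ‖s.2 - c.2‖ ^ 2 ≤ C2 := by
          have habs : s.1 ≤ |c.1| + |s.1 - c.1| := by
            nlinarith [le_abs_self (s.1 - c.1), le_abs_self c.1, abs_nonneg c.1,
              abs_nonneg (s.1 - c.1), neg_abs_le c.1, neg_abs_le (s.1 - c.1)]
          nlinarith [sq_nonneg (s.1 - c.1), abs_nonneg (s.1 - c.1), sq_abs (s.1 - c.1)]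
        have h2 := Real.sqrt_le_sqrt h1
        rwa [Real.sqrt_sq (norm_nonneg _)] at h2
      rw [Metric.mem_closedBall, Prod.dist_eq]
      apply max_le
      · rw [Real.dist_eq]
        exact le_trans ht (le_max_left _ _)
      · rw [dist_eq_norm]
        exact le_trans hu (le_max_right _ _)
    exact Metric.isBounded_closedBall.subset hsub
  -- S is compact and nonempty
  have hScompact : IsCompact S := Metric.isCompact_of_isClosed_isBounded hSclosed hSbounded
  have h10 : (1, (0 : EuclideanSpace ℝ (Fin p))) ∈ S := by
    constructor
    · simp
    · exact le_refl _
  -- f is continuous on S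
  have hfcont : ContinuousOn f S := by
    apply ContinuousOn.congr (hfbarcont.continuousOn)
    intro s hs
    exact hfeq s (hδleA s hs)
  obtain ⟨s0, hs0S, hmin⟩ := hScompact.exists_isMinOn ⟨_, h10⟩ hfcont
  have hglobal : ∀ s : ℝ × EuclideanSpace ℝ (Fin p), ‖s.2‖ < s.1 → f s0 ≤ f s := by
    intro s hs
    by_cases h : f s ≤ M
    · exact hmin ⟨hs, h⟩
    · have h1 : f s0 ≤ M := hs0S.2
      linarith [not_le.mp h]
  refine ⟨s0, ⟨hs0S.1, hglobal⟩, ?_⟩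
  rintro y ⟨hyU, hymin⟩
  by_contra hne
  have hm2 : ‖((2 : ℝ)⁻¹ • (y.2 + s0.2))‖ < (y.1 + s0.1) / 2 := by
    rw [norm_smul]
    have h1 : ‖y.2 + s0.2‖ ≤ ‖y.2‖ + ‖s0.2‖ := norm_add_le _ _
    have h2 : ‖(2 : ℝ)⁻¹‖ = 2⁻¹ := by
      rw [Real.norm_eq_abs, abs_of_pos]; norm_num
    rw [h2]
    have := hs0S.1
    nlinarith [hyU]
  have hlt := soc_midpoint_lt μ hμ c y s0 hyU hs0S.1 hne
  have h1 : f s0 ≤ f ((y.1 + s0.1) / 2, (2⁻¹ : ℝ) • (y.2 + s0.2)) := hglobal _ hm2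
  have h2 : f y ≤ f ((y.1 + s0.1) / 2, (2⁻¹ : ℝ) • (y.2 + s0.2)) := hymin _ hm2
  have h3 : f y ≤ f s0 := hymin _ hs0S.1
  have h4 : f s0 ≤ f y := hglobal _ hyU
  simp only [hfdef] at *
  linarith
end

section
/- Let μ > 0 and c = (0, c₁) ∈ ℝ × ℝ^{n−1}. Then the point s = (√(μ + ‖c₁‖²/4), c₁/2) lies in the interior of K_soc^n, satisfies s₀² − ‖s₁‖² = μ, and is the unique minimizer over the interior of K_soc^n of f_μ(s) = (1/2)‖s − c‖² − (μ/2) log(s₀² − ‖s₁‖²); equivalently it satisfies the optimality condition −(μ/(s₀² − ‖s₁‖²))·(s₀, −s₁) + s − c = 0. -/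
lemma socKey (p : ℕ) (μ : ℝ) (hμ : 0 < μ) (c₁ : EuclideanSpace ℝ (Fin p))
    (s : ℝ × EuclideanSpace ℝ (Fin p)) (hs : ‖s.2‖ < s.1) :
    socObj p μ (0, c₁) s
      - socObj p μ (0, c₁) (Real.sqrt (μ + ‖c₁‖ ^ 2 / 4), (1 / 2 : ℝ) • c₁)
    = (μ / 2) * ((s.1 ^ 2 - ‖s.2‖ ^ 2) / μ - 1 - Real.log ((s.1 ^ 2 - ‖s.2‖ ^ 2) / μ))
      + ‖s.2 - (1 / 2 : ℝ) • c₁‖ ^ 2 := by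
  have ht : 0 < s.1 ^ 2 - ‖s.2‖ ^ 2 := by nlinarith [norm_nonneg s.2]
  have hnn : (0:ℝ) ≤ μ + ‖c₁‖ ^ 2 / 4 := by positivity
  have hsq : (Real.sqrt (μ + ‖c₁‖ ^ 2 / 4)) ^ 2 = μ + ‖c₁‖ ^ 2 / 4 := Real.sq_sqrt hnn
  have hhalf : ‖(1 / 2 : ℝ) • c₁‖ ^ 2 = ‖c₁‖ ^ 2 / 4 := by
    rw [norm_smul]; simp [mul_pow]; ring
  have hdiff : ‖(1 / 2 : ℝ) • c₁ - c₁‖ ^ 2 = ‖c₁‖ ^ 2 / 4 := by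
    have : (1 / 2 : ℝ) • c₁ - c₁ = -((1 / 2 : ℝ) • c₁) := by module
    rw [this, norm_neg, hhalf]
  have h1 : ‖s.2 - c₁‖ ^ 2 = ‖s.2‖ ^ 2 - 2 * inner ℝ s.2 c₁ + ‖c₁‖ ^ 2 :=
    @norm_sub_sq_real _ _ _ _ _
  have h2 : ‖s.2 - (1 / 2 : ℝ) • c₁‖ ^ 2
      = ‖s.2‖ ^ 2 - inner ℝ s.2 c₁ + ‖c₁‖ ^ 2 / 4 := by
    rw [@norm_sub_sq_real _ _ _ _ _, real_inner_smul_right, hhalf]; ring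
  have hlog : Real.log ((s.1 ^ 2 - ‖s.2‖ ^ 2) / μ)
      = Real.log (s.1 ^ 2 - ‖s.2‖ ^ 2) - Real.log μ :=
    Real.log_div (ne_of_gt ht) (ne_of_gt hμ)
  have hlogμ : Real.log ((Real.sqrt (μ + ‖c₁‖ ^ 2 / 4)) ^ 2 - ‖(1 / 2 : ℝ) • c₁‖ ^ 2)
      = Real.log μ := by rw [hsq, hhalf]; ring_nf
  simp only [socObj, hlogμ]
  rw [hdiff, h1, h2, hlog]
  simp only [sub_zero]
  rw [hsq]
  field_simp
  ring

/-- For `μ > 0` and `c = (0, c₁)`, the point `s = (√(μ + ‖c₁‖²/4), c₁/2)` lies in the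
interior of the second-order cone, satisfies `s₀² − ‖s₁‖² = μ`, is the unique minimizer
of `f_μ` over the interior of the cone, and satisfies the optimality condition
`−(μ/(s₀² − ‖s₁‖²))·(s₀, −s₁) + s − c = 0`. -/
theorem stmt3 (p : ℕ) (μ : ℝ) (hμ : 0 < μ) (c₁ : EuclideanSpace ℝ (Fin p)) :
    let c : ℝ × EuclideanSpace ℝ (Fin p) := (0, c₁)
    let s0 : ℝ × EuclideanSpace ℝ (Fin p) :=
      (Real.sqrt (μ + ‖c₁‖ ^ 2 / 4), (1 / 2 : ℝ) • c₁)
    ‖s0.2‖ < s0.1 ∧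
    s0.1 ^ 2 - ‖s0.2‖ ^ 2 = μ ∧
    (∀ s : ℝ × EuclideanSpace ℝ (Fin p), ‖s.2‖ < s.1 →
      socObj p μ c s0 ≤ socObj p μ c s) ∧
    (∀ s : ℝ × EuclideanSpace ℝ (Fin p), ‖s.2‖ < s.1 →
      (∀ s' : ℝ × EuclideanSpace ℝ (Fin p), ‖s'.2‖ < s'.1 →
        socObj p μ c s ≤ socObj p μ c s') → s = s0) ∧
    (-(μ / (s0.1 ^ 2 - ‖s0.2‖ ^ 2))) • ((s0.1, -s0.2) : ℝ × EuclideanSpace ℝ (Fin p))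
        + s0 - c = 0 := by
  intro c s0
  have hnn : (0:ℝ) ≤ μ + ‖c₁‖ ^ 2 / 4 := by positivity
  have hsq : (Real.sqrt (μ + ‖c₁‖ ^ 2 / 4)) ^ 2 = μ + ‖c₁‖ ^ 2 / 4 := Real.sq_sqrt hnn
  have hhalf : ‖(1 / 2 : ℝ) • c₁‖ ^ 2 = ‖c₁‖ ^ 2 / 4 := by
    rw [norm_smul]; simp [mul_pow]; ring
  have hin : ‖s0.2‖ < s0.1 := by
    have h1 : ‖s0.2‖ ^ 2 < s0.1 ^ 2 := by
      show _ < (Real.sqrt _) ^ 2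
      rw [hsq]; show ‖(1 / 2 : ℝ) • c₁‖ ^ 2 < _; rw [hhalf]; linarith
    nlinarith [norm_nonneg s0.2, Real.sqrt_nonneg (μ + ‖c₁‖ ^ 2 / 4)]
  have heq : s0.1 ^ 2 - ‖s0.2‖ ^ 2 = μ := by
    show (Real.sqrt _) ^ 2 - ‖(1 / 2 : ℝ) • c₁‖ ^ 2 = μ
    rw [hsq, hhalf]; ring
  refine ⟨hin, heq, ?_, ?_, ?_⟩
  · intro s hs
    have hk := socKey p μ hμ c₁ s hs
    have ht : 0 < (s.1 ^ 2 - ‖s.2‖ ^ 2) / μ := by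
      have : 0 < s.1 ^ 2 - ‖s.2‖ ^ 2 := by nlinarith [norm_nonneg s.2]
      positivity
    have hl := Real.log_le_sub_one_of_pos ht
    nlinarith [sq_nonneg ‖s.2 - (1 / 2 : ℝ) • c₁‖]
  · intro s hs hmin
    have hle := hmin s0 hin
    have hk := socKey p μ hμ c₁ s hs
    have ht : 0 < (s.1 ^ 2 - ‖s.2‖ ^ 2) / μ := by
      have : 0 < s.1 ^ 2 - ‖s.2‖ ^ 2 := by nlinarith [norm_nonneg s.2]
      positivity
    have hl := Real.log_le_sub_one_of_pos ht
    -- both terms must be zero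
    have hB : ‖s.2 - (1 / 2 : ℝ) • c₁‖ ^ 2 = 0 := by
      nlinarith [sq_nonneg ‖s.2 - (1 / 2 : ℝ) • c₁‖]
    have hx : s.2 = (1 / 2 : ℝ) • c₁ := by
      have := pow_eq_zero_iff (n := 2) (by norm_num) |>.mp hB
      have := norm_eq_zero.mp this
      exact sub_eq_zero.mp this
    have hA : (s.1 ^ 2 - ‖s.2‖ ^ 2) / μ = 1 := by
      by_contra hne
      have hstrict := Real.log_lt_sub_one_of_pos ht hne
      nlinarith [sq_nonneg ‖s.2 - (1 / 2 : ℝ) • c₁‖]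
    have ha : s.1 ^ 2 = μ + ‖c₁‖ ^ 2 / 4 := by
      have h := (div_eq_one_iff_eq (ne_of_gt hμ)).mp hA
      rw [hx, hhalf] at h; linarith
    have ha' : s.1 = Real.sqrt (μ + ‖c₁‖ ^ 2 / 4) := by
      rw [← ha]
      exact (Real.sqrt_sq (le_of_lt (lt_of_le_of_lt (norm_nonneg s.2) hs))).symm
    exact Prod.ext ha' hx
  · rw [heq]
    have hcoef : -(μ / μ) = (-1 : ℝ) := by field_simp
    rw [hcoef]
    apply Prod.ext
    · show (-1 : ℝ) * s0.1 + s0.1 - 0 = 0; ring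
    · show (-1 : ℝ) • (-s0.2) + s0.2 - c₁ = 0
      show (-1 : ℝ) • (-((1/2:ℝ) • c₁)) + (1/2:ℝ) • c₁ - c₁ = 0
      module
end

section
/- Let μ > 0 and c = (c₀, c₁) ∈ ℝ × ℝ^{n−1} with c₀ ≠ 0. Define a = (c₀² − ‖c₁‖²)/μ and γ = (a + √(a² + 8(c₀² + ‖c₁‖²)/μ + 16))/2. Then γ > 2. Moreover, setting ρ = (γ + √(γ² − 4))/2 if c₀ > 0 and ρ = (γ − √(γ² − 4))/2 if c₀ < 0, one has ρ > 1 in the first case and 0 < ρ < 1 in the second case, and the point s with s₀ = ρ c₀/(ρ − 1) and s₁ = ρ c₁/(ρ + 1) lies in the interior of K_soc^n, satisfies s₀² − ‖s₁‖² = ρμ, and is the unique minimizer over the interior of K_soc^n of f_μ(s) = (1/2)‖s − c‖² − (μ/2) log(s₀² − ‖s₁‖²). -/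
open scoped InnerProductSpace

lemma aux_q0 (μ γ ρ c₀ r x0 y0 : ℝ) (hμ : 0 < μ) (hρ0 : 0 < ρ) (hρ1 : ρ ≠ 1)
    (hρq : ρ ^ 2 - γ * ρ + 1 = 0)
    (hkey : c₀ ^ 2 * (γ + 2) - r ^ 2 * (γ - 2) = μ * (γ ^ 2 - 4))
    (hx0 : x0 = ρ * c₀ / (ρ - 1)) (hy0 : y0 = ρ * r / (ρ + 1)) :
    x0 ^ 2 - y0 ^ 2 = ρ * μ := by
  have hρm : ρ - 1 ≠ 0 := sub_ne_zero.mpr hρ1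
  have hρp : ρ + 1 ≠ 0 := by positivity
  have hA : ρ * (γ + 2) = (ρ + 1) ^ 2 := by linear_combination (-1) * hρq
  have hB : ρ * (γ - 2) = (ρ - 1) ^ 2 := by linear_combination (-1) * hρq
  have hC : ρ ^ 2 * (γ ^ 2 - 4) = (ρ ^ 2 - 1) ^ 2 := by
    linear_combination (-(γ * ρ + ρ ^ 2 + 1)) * hρq
  rw [hx0, hy0]
  rw [div_pow, div_pow, div_sub_div _ _ (pow_ne_zero 2 hρm) (pow_ne_zero 2 hρp),
    div_eq_iff (mul_ne_zero (pow_ne_zero 2 hρm) (pow_ne_zero 2 hρp))]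
  linear_combination (-(c₀ ^ 2 * ρ ^ 2)) * hA + (r ^ 2 * ρ ^ 2) * hB + (μ * ρ) * hC +
    ρ ^ 3 * hkey

lemma key_h (μ β t ts : ℝ) (hμ : 0 < μ) (ht : 0 < t) (hts : 0 < ts)
    (heq : ts ^ 2 - β * ts - μ = 0) :
    (1/4) * (ts - β) ^ 2 - (μ/2) * Real.log ts + (t - ts) ^ 2 / 4 ≤
      (1/4) * (t - β) ^ 2 - (μ/2) * Real.log t := by
  have hlog : Real.log t - Real.log ts ≤ t / ts - 1 := by
    rw [← Real.log_div ht.ne' hts.ne']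
    exact Real.log_le_sub_one_of_pos (by positivity)
  have h3 : (μ/2) * (t / ts - 1) = ((ts - β)/2) * (t - ts) := by
    have : μ = ts * (ts - β) := by nlinarith
    field_simp [hts.ne']
    nlinarith [this]
  have h4 : (μ/2) * (Real.log t - Real.log ts) ≤ ((ts - β)/2) * (t - ts) := by
    calc (μ/2) * (Real.log t - Real.log ts) ≤ (μ/2) * (t / ts - 1) := by
          apply mul_le_mul_of_nonneg_left hlog (by positivity)
      _ = ((ts - β)/2) * (t - ts) := h3
  nlinarith [h4]

lemma aux_core (μ c₀ r x0 y0 x y : ℝ) (hμ : 0 < μ)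
    (hy0 : 0 ≤ y0) (hyx0 : y0 < x0)
    (hu : (x0 - y0) ^ 2 - (c₀ - r) * (x0 - y0) - μ = 0)
    (hv : (x0 + y0) ^ 2 - (c₀ + r) * (x0 + y0) - μ = 0)
    (hy : 0 ≤ y) (hyx : y < x) :
    (1/2) * (x0 - c₀) ^ 2 + (1/2) * (y0 - r) ^ 2 - (μ/2) * Real.log (x0 ^ 2 - y0 ^ 2)
      + ((x - y) - (x0 - y0)) ^ 2 / 4 + ((x + y) - (x0 + y0)) ^ 2 / 4
    ≤ (1/2) * (x - c₀) ^ 2 + (1/2) * (y - r) ^ 2 - (μ/2) * Real.log (x ^ 2 - y ^ 2) := by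
  have hu0 : 0 < x0 - y0 := by linarith
  have hv0 : 0 < x0 + y0 := by linarith
  have hux : 0 < x - y := by linarith
  have hvx : 0 < x + y := by linarith
  have hl0 : Real.log (x0 ^ 2 - y0 ^ 2) = Real.log (x0 - y0) + Real.log (x0 + y0) := by
    rw [← Real.log_mul hu0.ne' hv0.ne']; ring_nf
  have hl : Real.log (x ^ 2 - y ^ 2) = Real.log (x - y) + Real.log (x + y) := by
    rw [← Real.log_mul hux.ne' hvx.ne']; ring_nf
  have H1 := key_h μ (c₀ - r) (x - y) (x0 - y0) hμ hux hu0 hu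
  have H2 := key_h μ (c₀ + r) (x + y) (x0 + y0) hμ hvx hv0 hv
  rw [hl0, hl]
  nlinarith [H1, H2]

set_option maxHeartbeats 1000000 in
/-- For `μ > 0` and `c = (c₀, c₁)` with `c₀ ≠ 0`, with
`a = (c₀² − ‖c₁‖²)/μ`, `γ = (a + √(a² + 8(c₀² + ‖c₁‖²)/μ + 16))/2`, one has `γ > 2`;
with `ρ = (γ + √(γ² − 4))/2` if `c₀ > 0` and `ρ = (γ − √(γ² − 4))/2` if `c₀ < 0`,
one has `ρ > 1` in the first case and `0 < ρ < 1` in the second, and the point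
`s = (ρc₀/(ρ−1), ρ/(ρ+1) • c₁)` lies in the interior of the second-order cone,
satisfies `s₀² − ‖s₁‖² = ρμ`, and is the unique minimizer of `f_μ` over the
interior of the cone. -/
theorem stmt4 (p : ℕ) (μ : ℝ) (hμ : 0 < μ) (c₀ : ℝ) (hc₀ : c₀ ≠ 0)
    (c₁ : EuclideanSpace ℝ (Fin p)) :
    let a : ℝ := (c₀ ^ 2 - ‖c₁‖ ^ 2) / μ
    let γ : ℝ := (a + Real.sqrt (a ^ 2 + 8 * (c₀ ^ 2 + ‖c₁‖ ^ 2) / μ + 16)) / 2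
    let ρ : ℝ :=
      if 0 < c₀ then (γ + Real.sqrt (γ ^ 2 - 4)) / 2 else (γ - Real.sqrt (γ ^ 2 - 4)) / 2
    let s0 : ℝ × EuclideanSpace ℝ (Fin p) := (ρ * c₀ / (ρ - 1), (ρ / (ρ + 1)) • c₁)
    2 < γ ∧
    (0 < c₀ → 1 < ρ) ∧
    (c₀ < 0 → 0 < ρ ∧ ρ < 1) ∧
    ‖s0.2‖ < s0.1 ∧
    s0.1 ^ 2 - ‖s0.2‖ ^ 2 = ρ * μ ∧
    (∀ s : ℝ × EuclideanSpace ℝ (Fin p), ‖s.2‖ < s.1 →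
      socObj p μ (c₀, c₁) s0 ≤ socObj p μ (c₀, c₁) s) ∧
    (∀ s : ℝ × EuclideanSpace ℝ (Fin p), ‖s.2‖ < s.1 →
      (∀ s' : ℝ × EuclideanSpace ℝ (Fin p), ‖s'.2‖ < s'.1 →
        socObj p μ (c₀, c₁) s ≤ socObj p μ (c₀, c₁) s') → s = s0) := by
  intro a γ ρ s0
  have ha : a = (c₀ ^ 2 - ‖c₁‖ ^ 2) / μ := rfl
  have hγdef : γ = (a + Real.sqrt (a ^ 2 + 8 * (c₀ ^ 2 + ‖c₁‖ ^ 2) / μ + 16)) / 2 := rfl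
  have hρdef : ρ = if 0 < c₀ then (γ + Real.sqrt (γ ^ 2 - 4)) / 2
      else (γ - Real.sqrt (γ ^ 2 - 4)) / 2 := rfl
  have hs0 : s0 = (ρ * c₀ / (ρ - 1), (ρ / (ρ + 1)) • c₁) := rfl
  clear_value a γ ρ s0
  set r : ℝ := ‖c₁‖ with hrdef
  have hr0 : 0 ≤ r := norm_nonneg _
  have hc2 : 0 < c₀ ^ 2 := by positivity
  -- γ facts
  have hD0 : 0 ≤ a ^ 2 + 8 * (c₀ ^ 2 + r ^ 2) / μ + 16 := by positivity
  have hsq : Real.sqrt (a ^ 2 + 8 * (c₀ ^ 2 + r ^ 2) / μ + 16) ^ 2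
      = a ^ 2 + 8 * (c₀ ^ 2 + r ^ 2) / μ + 16 := Real.sq_sqrt hD0
  have hDgt : (4 - a) ^ 2 < a ^ 2 + 8 * (c₀ ^ 2 + r ^ 2) / μ + 16 := by
    have h8 : 8 * (c₀ ^ 2 + r ^ 2) / μ + 8 * a = 16 * c₀ ^ 2 / μ := by
      rw [ha]; field_simp; ring
    have hX : 0 < 16 * c₀ ^ 2 / μ := by positivity
    nlinarith [h8, hX]
  have hγ2 : 2 < γ := by
    have h1 : |4 - a| < Real.sqrt (a ^ 2 + 8 * (c₀ ^ 2 + r ^ 2) / μ + 16) := by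
      rw [← Real.sqrt_sq_eq_abs]
      exact Real.sqrt_lt_sqrt (sq_nonneg _) hDgt
    have h2 := le_abs_self (4 - a)
    rw [hγdef]; linarith
  have hγsq : γ ^ 2 = a * γ + 2 * (c₀ ^ 2 + r ^ 2) / μ + 4 := by
    have h2 : 2 * γ - a = Real.sqrt (a ^ 2 + 8 * (c₀ ^ 2 + r ^ 2) / μ + 16) := by
      rw [hγdef]; ring
    have h3 : (2 * γ - a) ^ 2 = a ^ 2 + 8 * (c₀ ^ 2 + r ^ 2) / μ + 16 := by rw [h2]; exact hsq
    linear_combination (1/4) * h3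
  have hkey : c₀ ^ 2 * (γ + 2) - r ^ 2 * (γ - 2) = μ * (γ ^ 2 - 4) := by
    have h1 : a * μ = c₀ ^ 2 - r ^ 2 := by rw [ha]; field_simp
    have h5 : μ * (2 * (c₀ ^ 2 + r ^ 2) / μ) = 2 * (c₀ ^ 2 + r ^ 2) := by field_simp
    linear_combination (-μ) * hγsq - h5 - γ * h1
  -- ρ facts
  have hγ4 : 0 < γ ^ 2 - 4 := by nlinarith [hγ2, sq_nonneg (γ - 2)]
  have hsg : Real.sqrt (γ ^ 2 - 4) ^ 2 = γ ^ 2 - 4 := Real.sq_sqrt hγ4.le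
  have hsg0 : 0 < Real.sqrt (γ ^ 2 - 4) := Real.sqrt_pos.mpr hγ4
  have hsglt : Real.sqrt (γ ^ 2 - 4) < γ := by
    refine lt_of_pow_lt_pow_left₀ 2 (by linarith) ?_
    linarith [hsg]
  have hsglt2 : γ - 2 < Real.sqrt (γ ^ 2 - 4) := by
    refine lt_of_pow_lt_pow_left₀ 2 hsg0.le ?_
    have hexp : (γ - 2) ^ 2 = γ ^ 2 - 4 * γ + 4 := by ring
    linarith [hsg, hexp]
  have hρq : ρ ^ 2 - γ * ρ + 1 = 0 := by
    by_cases h : 0 < c₀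
    · rw [hρdef, if_pos h]; linear_combination (1/4) * hsg
    · rw [hρdef, if_neg h]; linear_combination (1/4) * hsg
  have hρ1 : 0 < c₀ → 1 < ρ := by
    intro h; rw [hρdef, if_pos h]; linarith
  have hρ2 : c₀ < 0 → 0 < ρ ∧ ρ < 1 := by
    intro h
    rw [hρdef, if_neg (by linarith : ¬ 0 < c₀)]
    constructor <;> linarith
  have hρ0 : 0 < ρ := by
    rcases hc₀.lt_or_gt with h | h
    · exact (hρ2 h).1
    · linarith [hρ1 h]
  have hρne1 : ρ ≠ 1 := by
    rcases hc₀.lt_or_gt with h | h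
    · exact ne_of_lt (hρ2 h).2
    · exact ne_of_gt (hρ1 h)
  have hρm : ρ - 1 ≠ 0 := sub_ne_zero.mpr hρne1
  have hρp : (0:ℝ) < ρ + 1 := by linarith
  -- the candidate point
  set x0 : ℝ := ρ * c₀ / (ρ - 1) with hx0def
  set y0 : ℝ := ρ * r / (ρ + 1) with hy0def
  have hq0 : x0 ^ 2 - y0 ^ 2 = ρ * μ :=
    aux_q0 μ γ ρ c₀ r x0 y0 hμ hρ0 hρne1 hρq hkey hx0def hy0def
  have hx0pos : 0 < x0 := by
    rw [hx0def, div_pos_iff]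
    rcases hc₀.lt_or_gt with h | h
    · right
      constructor
      · exact mul_neg_of_pos_of_neg hρ0 h
      · linarith [(hρ2 h).2]
    · left
      exact ⟨mul_pos hρ0 h, by linarith [hρ1 h]⟩
  have hy0nn : 0 ≤ y0 := by
    rw [hy0def]
    exact div_nonneg (mul_nonneg hρ0.le hr0) hρp.le
  have hy0x0 : y0 < x0 := by
    refine lt_of_pow_lt_pow_left₀ 2 hx0pos.le ?_
    linarith [hq0, mul_pos hρ0 hμ]
  have g1 : ρ * x0 - ρ * c₀ = x0 := by rw [hx0def]; field_simp; ring
  have g2 : ρ * r - ρ * y0 = y0 := by rw [hy0def]; field_simp; ring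
  have hu : (x0 - y0) ^ 2 - (c₀ - r) * (x0 - y0) - μ = 0 := by
    have h : ρ * ((x0 - y0) ^ 2 - (c₀ - r) * (x0 - y0) - μ) = 0 := by
      linear_combination (x0 - y0) * g1 + (x0 - y0) * g2 + hq0
    exact (mul_eq_zero.mp h).resolve_left hρ0.ne'
  have hv : (x0 + y0) ^ 2 - (c₀ + r) * (x0 + y0) - μ = 0 := by
    have h : ρ * ((x0 + y0) ^ 2 - (c₀ + r) * (x0 + y0) - μ) = 0 := by
      linear_combination (x0 + y0) * g1 - (x0 + y0) * g2 + hq0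
    exact (mul_eq_zero.mp h).resolve_left hρ0.ne'
  -- norm facts about s0
  have hκnn : 0 ≤ ρ / (ρ + 1) := div_nonneg hρ0.le hρp.le
  have hnorm : ‖(ρ / (ρ + 1)) • c₁‖ = y0 := by
    rw [norm_smul, Real.norm_eq_abs, abs_of_nonneg hκnn, ← hrdef, hy0def]; ring
  have hdiff : ‖(ρ / (ρ + 1)) • c₁ - c₁‖ ^ 2 = (y0 - r) ^ 2 := by
    have h : (ρ / (ρ + 1)) • c₁ - c₁ = (ρ / (ρ + 1) - 1) • c₁ := by
      rw [sub_smul, one_smul]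
    rw [h, norm_smul, Real.norm_eq_abs, mul_pow, sq_abs, ← hrdef, hy0def]; ring
  have hcone0 : ‖s0.2‖ < s0.1 := by
    rw [hs0]; simpa [hnorm] using hy0x0
  have hval : socObj p μ (c₀, c₁) s0
      = (1/2) * (x0 - c₀) ^ 2 + (1/2) * (y0 - r) ^ 2 - (μ/2) * Real.log (x0 ^ 2 - y0 ^ 2) := by
    rw [hs0]; simp only [socObj, hdiff, hnorm]; ring
  refine ⟨hγ2, hρ1, hρ2, hcone0, ?_, ?_, ?_⟩
  · rw [hs0]; simp only [hnorm]; exact hq0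
  · -- minimality
    intro s hsc
    have hy : 0 ≤ ‖s.2‖ := norm_nonneg _
    have hip : ⟪s.2, c₁⟫_ℝ ≤ ‖s.2‖ * r := real_inner_le_norm _ _
    have hns : ‖s.2 - c₁‖ ^ 2 = ‖s.2‖ ^ 2 - 2 * ⟪s.2, c₁⟫_ℝ + r ^ 2 := norm_sub_sq_real _ _
    have hexp : (‖s.2‖ - r) ^ 2 = ‖s.2‖ ^ 2 - 2 * (‖s.2‖ * r) + r ^ 2 := by ring
    have hge : (‖s.2‖ - r) ^ 2 ≤ ‖s.2 - c₁‖ ^ 2 := by linarith [hns, hip, hexp]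
    have Hc := aux_core μ c₀ r x0 y0 s.1 ‖s.2‖ hμ hy0nn hy0x0 hu hv hy hsc
    have hobjs : socObj p μ (c₀, c₁) s
        = (1/2) * ((s.1 - c₀) ^ 2 + ‖s.2 - c₁‖ ^ 2)
          - (μ/2) * Real.log (s.1 ^ 2 - ‖s.2‖ ^ 2) := rfl
    rw [hval, hobjs]
    linarith [Hc, hge, sq_nonneg ((s.1 - ‖s.2‖) - (x0 - y0)),
      sq_nonneg ((s.1 + ‖s.2‖) - (x0 + y0))]
  · -- uniqueness
    intro s hsc hmin
    have hle := hmin s0 hcone0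
    have hy : 0 ≤ ‖s.2‖ := norm_nonneg _
    have hip : ⟪s.2, c₁⟫_ℝ ≤ ‖s.2‖ * r := real_inner_le_norm _ _
    have hns : ‖s.2 - c₁‖ ^ 2 = ‖s.2‖ ^ 2 - 2 * ⟪s.2, c₁⟫_ℝ + r ^ 2 := norm_sub_sq_real _ _
    have hexp : (‖s.2‖ - r) ^ 2 = ‖s.2‖ ^ 2 - 2 * (‖s.2‖ * r) + r ^ 2 := by ring
    have hge : (‖s.2‖ - r) ^ 2 ≤ ‖s.2 - c₁‖ ^ 2 := by linarith [hns, hip, hexp]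
    have Hc := aux_core μ c₀ r x0 y0 s.1 ‖s.2‖ hμ hy0nn hy0x0 hu hv hy hsc
    have hobjs : socObj p μ (c₀, c₁) s
        = (1/2) * ((s.1 - c₀) ^ 2 + ‖s.2 - c₁‖ ^ 2)
          - (μ/2) * Real.log (s.1 ^ 2 - ‖s.2‖ ^ 2) := rfl
    rw [hobjs, hval] at hle
    have hB : ((s.1 - ‖s.2‖) - (x0 - y0)) ^ 2 = 0 := by
      refine le_antisymm ?_ (sq_nonneg _)
      linarith [Hc, hge, hle, sq_nonneg ((s.1 + ‖s.2‖) - (x0 + y0))]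
    have hC : ((s.1 + ‖s.2‖) - (x0 + y0)) ^ 2 = 0 := by
      refine le_antisymm ?_ (sq_nonneg _)
      linarith [Hc, hge, hle, sq_nonneg ((s.1 - ‖s.2‖) - (x0 - y0))]
    have hA0 : ‖s.2 - c₁‖ ^ 2 = (‖s.2‖ - r) ^ 2 := by
      refine le_antisymm ?_ hge
      linarith [Hc, hle, sq_nonneg ((s.1 - ‖s.2‖) - (x0 - y0)),
        sq_nonneg ((s.1 + ‖s.2‖) - (x0 + y0))]
    have hB' : s.1 - ‖s.2‖ = x0 - y0 := by
      have := pow_eq_zero_iff (n := 2) (by norm_num) |>.mp hB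
      linarith [sub_eq_zero.mp this]
    have hC' : s.1 + ‖s.2‖ = x0 + y0 := by
      have := pow_eq_zero_iff (n := 2) (by norm_num) |>.mp hC
      linarith [sub_eq_zero.mp this]
    have hx : s.1 = x0 := by linarith
    have hyy : ‖s.2‖ = y0 := by linarith
    have hiner : ⟪s.2, c₁⟫_ℝ = ‖s.2‖ * ‖c₁‖ := by
      rw [← hrdef]; linear_combination (1/2) * hns - (1/2) * hA0
    have hpar : ‖c₁‖ • s.2 = ‖s.2‖ • c₁ := inner_eq_norm_mul_iff_real.mp hiner
    have hs2 : s.2 = (ρ / (ρ + 1)) • c₁ := by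
      rcases eq_or_ne r 0 with h0 | h0
      · have hc1 : c₁ = 0 := by rwa [hrdef, norm_eq_zero] at h0
        have hy00 : y0 = 0 := by rw [hy0def, h0]; ring
        have : ‖s.2‖ = 0 := by rw [hyy, hy00]
        rw [norm_eq_zero] at this
        rw [this, hc1, smul_zero]
      · rw [← hrdef] at hpar
        have : s.2 = (y0 / r) • c₁ := by
          rw [div_eq_inv_mul, mul_smul, ← hyy, ← hpar, inv_smul_smul₀ h0]
        rw [this]
        congr 1
        rw [hy0def]
        field_simp
    rw [hs0, Prod.ext_iff]
    exact ⟨by rw [hx, hx0def], hs2⟩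
end

section
/- Let μ⁰ > 0, λ > 0 and c ∈ ℝⁿ (n ≥ 2). Let s⁰ be the unique minimizer over the interior of K_soc^n of (1/2)‖s − c‖² − (μ⁰/2) log(s₀² − ‖s₁‖²), and set z⁰ = (s⁰ − c)/λ. Then s⁰ lies in the interior of K_soc^n, z⁰ lies in the interior of K_soc^n, and ⟨s⁰, z⁰⟩ = μ⁰/λ. -/
open scoped RealInnerProductSpace

lemma norm_add_smul_sq {p : ℕ} (a v : EuclideanSpace ℝ (Fin p)) (ε : ℝ) :
    ‖a + ε • v‖ ^ 2 = ‖a‖ ^ 2 + 2 * ε * ⟪a, v⟫ + ε ^ 2 * ‖v‖ ^ 2 := by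
  have h := norm_add_sq_real a (ε • v)
  rw [h, real_inner_smul_right, norm_smul, Real.norm_eq_abs, mul_pow, sq_abs]
  ring

/-- Let `μ⁰ > 0`, `λ > 0`, `c ∈ ℝⁿ` (`n = p + 1 ≥ 2`), let `s⁰` be the (unique)
minimizer of `(1/2)‖s − c‖² − (μ⁰/2) log(s₀² − ‖s₁‖²)` over the interior of the
second-order cone, and `z⁰ = (s⁰ − c)/λ`. Then `s⁰` and `z⁰` lie in the interior
of the second-order cone, and `⟨s⁰, z⁰⟩ = μ⁰/λ`. -/
theorem stmt7 (p : ℕ) (hp : 1 ≤ p) (μ0 lam : ℝ) (hμ : 0 < μ0) (hlam : 0 < lam)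
    (c s0 : ℝ × EuclideanSpace ℝ (Fin p))
    (hint : ‖s0.2‖ < s0.1)
    (hmin : ∀ s : ℝ × EuclideanSpace ℝ (Fin p), ‖s.2‖ < s.1 →
      socObj p μ0 c s0 ≤ socObj p μ0 c s) :
    let z0 : ℝ × EuclideanSpace ℝ (Fin p) := lam⁻¹ • (s0 - c)
    ‖s0.2‖ < s0.1 ∧ ‖z0.2‖ < z0.1 ∧ s0.1 * z0.1 + ⟪s0.2, z0.2⟫ = μ0 / lam := by
  intro z0
  set t := s0.1 with htdef
  set x := s0.2 with hxdef
  have hx0 : (0:ℝ) ≤ ‖x‖ := norm_nonneg _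
  have ht : 0 < t := lt_of_le_of_lt hx0 hint
  set d : ℝ := t ^ 2 - ‖x‖ ^ 2 with hddef
  have hdpos : 0 < d := by nlinarith
  have hdne : d ≠ 0 := ne_of_gt hdpos
  have hz1 : z0.1 = lam⁻¹ * (t - c.1) := rfl
  have hz2 : z0.2 = lam⁻¹ • (x - c.2) := rfl
  -- first coordinate stationarity
  have key1 : t - c.1 = μ0 * t / d := by
    have hloc : IsLocalMin (fun u : ℝ => socObj p μ0 c (u, x)) t := by
      filter_upwards [eventually_gt_nhds hint] with u hu
      exact hmin (u, x) hu
    have hder : HasDerivAt (fun u : ℝ => socObj p μ0 c (u, x))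
        ((1/2) * (2*(t - c.1)) - (μ0/2) * (2*t/d)) t := by
      have h1 : HasDerivAt (fun u : ℝ => (u - c.1) ^ 2) (2*(t - c.1)) t := by
        simpa [Pi.pow_def] using ((hasDerivAt_id t).sub_const c.1).pow 2
      have h2 : HasDerivAt (fun u : ℝ => u ^ 2 - ‖x‖ ^ 2) (2*t) t := by
        simpa using (hasDerivAt_pow 2 t).sub_const (‖x‖ ^ 2)
      have h3 : HasDerivAt (fun u : ℝ => Real.log (u ^ 2 - ‖x‖ ^ 2)) (2*t/d) t := by
        have := h2.log (by simpa [← hddef] using hdne)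
        simpa [← hddef] using this
      exact ((h1.add_const (‖x - c.2‖ ^ 2)).const_mul (1/2:ℝ)).sub (h3.const_mul (μ0/2))
    have hzero := hloc.deriv_eq_zero
    rw [hder.deriv] at hzero
    have : (t - c.1) - μ0 * t / d = 0 := by field_simp at hzero ⊢; linarith
    linarith
  -- second coordinate stationarity
  have key2 : x - c.2 = (-(μ0 / d)) • x := by
    have hall : ∀ v : EuclideanSpace ℝ (Fin p),
        ⟪(x - c.2) + (μ0 / d) • x, v⟫ = 0 := by
      intro v
      have hloc : IsLocalMin (fun ε : ℝ => socObj p μ0 c (t, x + ε • v)) 0 := by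
        have hcont : ContinuousAt (fun ε : ℝ => ‖x + ε • v‖) 0 := by
          fun_prop
        have hev : ∀ᶠ ε in nhds (0:ℝ), ‖x + ε • v‖ < t := by
          have h0 : ‖x + (0:ℝ) • v‖ < t := by simpa using hint
          exact hcont.eventually_lt continuousAt_const h0
        filter_upwards [hev] with ε hε
        have h0 : (t, x + (0:ℝ) • v) = s0 := by simp [htdef, hxdef]
        rw [h0]
        exact hmin (t, x + ε • v) hε
      have heq : (fun ε : ℝ => socObj p μ0 c (t, x + ε • v)) =
          fun ε : ℝ => (1/2) * ((t - c.1) ^ 2 +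
            (‖x - c.2‖ ^ 2 + 2 * ε * ⟪x - c.2, v⟫ + ε ^ 2 * ‖v‖ ^ 2)) -
            (μ0/2) * Real.log (t ^ 2 -
            (‖x‖ ^ 2 + 2 * ε * ⟪x, v⟫ + ε ^ 2 * ‖v‖ ^ 2)) := by
        funext ε
        have h1 : x + ε • v - c.2 = (x - c.2) + ε • v := by abel
        simp only [socObj, h1, norm_add_smul_sq]
      have hder : HasDerivAt (fun ε : ℝ => socObj p μ0 c (t, x + ε • v))
          ((1/2) * (2 * ⟪x - c.2, v⟫) - (μ0/2) * ((-(2 * ⟪x, v⟫))/d)) 0 := by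
        rw [heq]
        have hq1 : HasDerivAt (fun ε : ℝ => ‖x - c.2‖ ^ 2 + 2 * ε * ⟪x - c.2, v⟫ +
            ε ^ 2 * ‖v‖ ^ 2) (2 * ⟪x - c.2, v⟫) 0 := by
          simpa [Pi.add_def] using ((hasDerivAt_const (0:ℝ) (‖x - c.2‖ ^ 2)).add
            (((hasDerivAt_id (0:ℝ)).const_mul 2).mul_const ⟪x - c.2, v⟫)).add
            ((hasDerivAt_pow 2 (0:ℝ)).mul_const (‖v‖ ^ 2))
        have hq2 : HasDerivAt (fun ε : ℝ => t ^ 2 -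
            (‖x‖ ^ 2 + 2 * ε * ⟪x, v⟫ + ε ^ 2 * ‖v‖ ^ 2)) (-(2 * ⟪x, v⟫)) 0 := by
          have hq : HasDerivAt (fun ε : ℝ => ‖x‖ ^ 2 + 2 * ε * ⟪x, v⟫ +
              ε ^ 2 * ‖v‖ ^ 2) (2 * ⟪x, v⟫) 0 := by
            simpa [Pi.add_def] using ((hasDerivAt_const (0:ℝ) (‖x‖ ^ 2)).add
              (((hasDerivAt_id (0:ℝ)).const_mul 2).mul_const ⟪x, v⟫)).add
              ((hasDerivAt_pow 2 (0:ℝ)).mul_const (‖v‖ ^ 2))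
          simpa [Pi.sub_def] using (hasDerivAt_const (0:ℝ) (t^2)).sub hq
        have hval : t ^ 2 - (‖x‖ ^ 2 + 2 * (0:ℝ) * ⟪x, v⟫ + (0:ℝ) ^ 2 * ‖v‖ ^ 2) = d := by
          simp [hddef]
        have hq3 : HasDerivAt (fun ε : ℝ => Real.log (t ^ 2 -
            (‖x‖ ^ 2 + 2 * ε * ⟪x, v⟫ + ε ^ 2 * ‖v‖ ^ 2))) ((-(2 * ⟪x, v⟫))/d) 0 := by
          have := hq2.log (by rw [hval]; exact hdne)
          rw [hval] at this
          exact this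
        exact ((hq1.const_add ((t - c.1)^2)).const_mul (1/2:ℝ)).sub (hq3.const_mul (μ0/2))
      have hzero := hloc.deriv_eq_zero
      rw [hder.deriv] at hzero
      rw [inner_add_left, real_inner_smul_left]
      have heq2 : ⟪x - c.2, v⟫ + μ0 / d * ⟪x, v⟫ = 0 := by
        field_simp at hzero ⊢
        linarith
      linarith
    have hw := hall ((x - c.2) + (μ0 / d) • x)
    rw [inner_self_eq_zero] at hw
    have := eq_neg_of_add_eq_zero_left hw
    rw [this, neg_smul]
  -- conclude
  have hz1' : z0.1 = μ0 * t / (lam * d) := by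
    rw [hz1, key1]; field_simp; try ring
  have hz2' : z0.2 = (-(μ0 / (lam * d))) • x := by
    rw [hz2, key2, smul_smul]
    congr 1
    field_simp
  have hnorm : ‖z0.2‖ = μ0 / (lam * d) * ‖x‖ := by
    rw [hz2', norm_smul, Real.norm_eq_abs, abs_neg, abs_of_pos (by positivity)]
  refine ⟨hint, ?_, ?_⟩
  · rw [hnorm, hz1']
    have hpos : 0 < μ0 / (lam * d) := by positivity
    have := mul_lt_mul_of_pos_left hint hpos
    calc μ0 / (lam * d) * ‖x‖ < μ0 / (lam * d) * t := this
      _ = μ0 * t / (lam * d) := by ring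
  · rw [hz1', hz2', real_inner_smul_right, real_inner_self_eq_norm_sq]
    field_simp
    try ring_nf
    try nlinarith [hdpos]
end

section
/- Let s = (s₀, s₁) and z = (z₀, z₁) belong to K_soc^n with s₀ > 0, z₀ > 0 and ⟨s, z⟩ = s₀z₀ + ⟨s₁, z₁⟩ = 0. Then s₀ = ‖s₁‖, z₀ = ‖z₁‖, and s₁ = −λ z₁ where λ = s₀/z₀; in particular, both s and z lie on the boundary of K_soc^n and s₁ and z₁ point in exactly opposite directions. -/
open scoped RealInnerProductSpace

/-- Let `s = (s₀, s₁)` and `z = (z₀, z₁)` belong to the second-order cone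
(`‖s₁‖ ≤ s₀`, `‖z₁‖ ≤ z₀`) with `s₀ > 0`, `z₀ > 0` and
`⟨s, z⟩ = s₀z₀ + ⟨s₁, z₁⟩ = 0`. Then `s₀ = ‖s₁‖`, `z₀ = ‖z₁‖` (both points are on
the boundary of the cone), and `s₁ = −λ z₁` where `λ = s₀/z₀` (`s₁` and `z₁`
point in exactly opposite directions). -/
theorem stmt9 (m : ℕ) (s0 z0 : ℝ) (s1 z1 : EuclideanSpace ℝ (Fin m))
    (hsK : ‖s1‖ ≤ s0) (hzK : ‖z1‖ ≤ z0)
    (hs0 : 0 < s0) (hz0 : 0 < z0)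
    (hortho : s0 * z0 + ⟪s1, z1⟫ = 0) :
    s0 = ‖s1‖ ∧ z0 = ‖z1‖ ∧ s1 = -(s0 / z0) • z1 := by
  have hinner : ⟪s1, z1⟫ = -(s0 * z0) := by linarith
  have hcs : |⟪s1, z1⟫| ≤ ‖s1‖ * ‖z1‖ := abs_real_inner_le_norm s1 z1
  have habs : |⟪s1, z1⟫| = s0 * z0 := by
    rw [hinner, abs_neg, abs_of_pos (mul_pos hs0 hz0)]
  have hprod : ‖s1‖ * ‖z1‖ = s0 * z0 := by
    have h1 : ‖s1‖ * ‖z1‖ ≤ s0 * z0 :=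
      mul_le_mul hsK hzK (norm_nonneg _) hs0.le
    linarith [habs ▸ hcs]
  have hns : s0 = ‖s1‖ := by
    by_contra h
    have hlt : ‖s1‖ < s0 := lt_of_le_of_ne hsK (fun h' => h h'.symm)
    have hzpos : 0 < ‖z1‖ := by
      rcases (norm_nonneg z1).lt_or_eq with h' | h'
      · exact h'
      · exfalso; nlinarith
    nlinarith
  have hnz : z0 = ‖z1‖ := by
    by_contra h
    have hlt : ‖z1‖ < z0 := lt_of_le_of_ne hzK (fun h' => h h'.symm)
    nlinarith [norm_nonneg s1]
  refine ⟨hns, hnz, ?_⟩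
  have heq : ⟪s1, -z1⟫ = ‖s1‖ * ‖-z1‖ := by
    rw [inner_neg_right, norm_neg, hinner, hns, hnz]; ring
  have := (inner_eq_norm_mul_iff_real).mp heq
  -- this : ‖-z1‖ • s1 = ‖s1‖ • (-z1)
  rw [norm_neg] at this
  have hzpos : (0:ℝ) < ‖z1‖ := hnz ▸ hz0
  have : s1 = (‖z1‖)⁻¹ • (‖s1‖ • (-z1)) := by
    rw [← this, smul_smul, inv_mul_cancel₀ hzpos.ne', one_smul]
  rw [this, ← hns, ← hnz, smul_smul, smul_neg, ← neg_smul]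
  congr 1
  field_simp
end

section
/- Let s* = (s₀*, s₁*) and z* = (z₀*, z₁*) belong to K_soc^n with s₀* > 0, z₀* > 0 and ⟨s*, z*⟩ = 0, and let μ⁰ > 0 and λ = s₀*/z₀*. Then c := s* − λz* = (0, 2s₁*), the unique minimizer over the interior of K_soc^n of (1/2)‖s − c‖² − (μ⁰/2) log(s₀² − ‖s₁‖²) is s⁰ = (√(μ⁰ + ‖s₁*‖²), s₁*), the point z⁰ := (s⁰ − c)/λ equals (√(μ⁰/λ² + ‖z₁*‖²), z₁*), and ⟨s⁰, z⁰⟩ = μ⁰/λ. -/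
open scoped RealInnerProductSpace

lemma socObj_eq (p : ℕ) (μ0 : ℝ) (v : EuclideanSpace ℝ (Fin p))
    (s : ℝ × EuclideanSpace ℝ (Fin p)) :
    socObj p μ0 ((0 : ℝ), (2 : ℝ) • v) s =
      ‖s.2 - v‖ ^ 2 + ‖v‖ ^ 2 + (s.1 ^ 2 - ‖s.2‖ ^ 2) / 2
        - (μ0 / 2) * Real.log (s.1 ^ 2 - ‖s.2‖ ^ 2) := by
  unfold socObj
  have h1 : ‖s.2 - (2:ℝ) • v‖ ^ 2 = ‖s.2‖ ^ 2 - 2 * ⟪s.2, (2:ℝ) • v⟫ + ‖(2:ℝ) • v‖ ^ 2 :=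
    norm_sub_sq_real s.2 ((2:ℝ) • v)
  have h2 : ‖s.2 - v‖ ^ 2 = ‖s.2‖ ^ 2 - 2 * ⟪s.2, v⟫ + ‖v‖ ^ 2 := norm_sub_sq_real s.2 v
  have h3 : ⟪s.2, (2:ℝ) • v⟫ = 2 * ⟪s.2, v⟫ := real_inner_smul_right s.2 v 2
  have h4 : ‖(2:ℝ) • v‖ ^ 2 = 4 * ‖v‖ ^ 2 := by
    rw [norm_smul]; norm_num; ring
  simp only [h1, h3, h4, h2]
  ring

lemma socObj_eq_mk (p : ℕ) (μ0 : ℝ) (v : EuclideanSpace ℝ (Fin p))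
    (t : ℝ) (x : EuclideanSpace ℝ (Fin p)) :
    socObj p μ0 ((0 : ℝ), (2 : ℝ) • v) (t, x) =
      ‖x - v‖ ^ 2 + ‖v‖ ^ 2 + (t ^ 2 - ‖x‖ ^ 2) / 2
        - (μ0 / 2) * Real.log (t ^ 2 - ‖x‖ ^ 2) :=
  socObj_eq p μ0 v (t, x)

lemma gbound (μ0 : ℝ) (hμ : 0 < μ0) (y : ℝ) (hy : 0 < y) :
    μ0 / 2 - (μ0 / 2) * Real.log μ0 ≤ y / 2 - (μ0 / 2) * Real.log y := by
  have h := Real.log_le_sub_one_of_pos (show 0 < y / μ0 by positivity)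
  rw [Real.log_div (ne_of_gt hy) (ne_of_gt hμ)] at h
  have h2 : (μ0 / 2) * (Real.log y - Real.log μ0) ≤ (μ0 / 2) * (y / μ0 - 1) :=
    mul_le_mul_of_nonneg_left h (by positivity)
  have h3 : (μ0 / 2) * (y / μ0 - 1) = y / 2 - μ0 / 2 := by field_simp
  nlinarith

lemma gbound_strict (μ0 : ℝ) (hμ : 0 < μ0) (y : ℝ) (hy : 0 < y) (hne : y ≠ μ0) :
    μ0 / 2 - (μ0 / 2) * Real.log μ0 < y / 2 - (μ0 / 2) * Real.log y := by
  have hne' : y / μ0 ≠ 1 := by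
    intro h
    apply hne
    field_simp at h
    linarith
  have h := Real.log_lt_sub_one_of_pos (show 0 < y / μ0 by positivity) hne'
  rw [Real.log_div (ne_of_gt hy) (ne_of_gt hμ)] at h
  have h2 : (μ0 / 2) * (Real.log y - Real.log μ0) < (μ0 / 2) * (y / μ0 - 1) :=
    mul_lt_mul_of_pos_left h (by positivity)
  have h3 : (μ0 / 2) * (y / μ0 - 1) = y / 2 - μ0 / 2 := by field_simp
  nlinarith

set_option maxHeartbeats 1000000 in
/-- Let `s* = (s₀*, s₁*)`, `z* = (z₀*, z₁*)` belong to the second-order cone with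
`s₀* > 0`, `z₀* > 0`, `⟨s*, z*⟩ = 0`, and let `μ⁰ > 0`, `λ = s₀*/z₀*`. Then
`c := s* − λz* = (0, 2s₁*)`, the unique minimizer over the interior of the cone of
`(1/2)‖s − c‖² − (μ⁰/2) log(s₀² − ‖s₁‖²)` is `s⁰ = (√(μ⁰ + ‖s₁*‖²), s₁*)`,
the point `z⁰ := (s⁰ − c)/λ` equals `(√(μ⁰/λ² + ‖z₁*‖²), z₁*)`, and
`⟨s⁰, z⁰⟩ = μ⁰/λ`. -/
theorem stmt10 (p : ℕ) (μ0 : ℝ) (hμ : 0 < μ0)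
    (s0star z0star : ℝ) (s1star z1star : EuclideanSpace ℝ (Fin p))
    (hsK : ‖s1star‖ ≤ s0star) (hzK : ‖z1star‖ ≤ z0star)
    (hs0 : 0 < s0star) (hz0 : 0 < z0star)
    (hcomp : s0star * z0star + ⟪s1star, z1star⟫ = 0) :
    let lam : ℝ := s0star / z0star
    let c : ℝ × EuclideanSpace ℝ (Fin p) :=
      ((s0star, s1star) : ℝ × EuclideanSpace ℝ (Fin p)) - lam • (z0star, z1star)
    let s0 : ℝ × EuclideanSpace ℝ (Fin p) := (Real.sqrt (μ0 + ‖s1star‖ ^ 2), s1star)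
    let z0 : ℝ × EuclideanSpace ℝ (Fin p) := lam⁻¹ • (s0 - c)
    c = ((0 : ℝ), (2 : ℝ) • s1star) ∧
    (‖s0.2‖ < s0.1 ∧
      ∀ s : ℝ × EuclideanSpace ℝ (Fin p), ‖s.2‖ < s.1 →
        socObj p μ0 c s0 ≤ socObj p μ0 c s) ∧
    (∀ s : ℝ × EuclideanSpace ℝ (Fin p), ‖s.2‖ < s.1 →
      (∀ s' : ℝ × EuclideanSpace ℝ (Fin p), ‖s'.2‖ < s'.1 →
        socObj p μ0 c s ≤ socObj p μ0 c s') → s = s0) ∧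
    z0 = ((Real.sqrt (μ0 / lam ^ 2 + ‖z1star‖ ^ 2), z1star) :
      ℝ × EuclideanSpace ℝ (Fin p)) ∧
    s0.1 * z0.1 + ⟪s0.2, z0.2⟫ = μ0 / lam := by
  intro lam c s0 z0
  have hlamdef : lam = s0star / z0star := rfl
  have hz0def : z0 = lam⁻¹ • (s0 - c) := rfl
  have hip : ⟪s1star, z1star⟫ = -(s0star * z0star) := by linarith
  -- norms are attained
  have hcs : |⟪s1star, z1star⟫| ≤ ‖s1star‖ * ‖z1star‖ := abs_real_inner_le_norm _ _
  have hcs' : s0star * z0star ≤ ‖s1star‖ * ‖z1star‖ := by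
    rw [hip, abs_neg, abs_of_pos (by positivity)] at hcs; exact hcs
  have hmul : ‖s1star‖ * ‖z1star‖ ≤ s0star * z0star :=
    mul_le_mul hsK hzK (norm_nonneg _) hs0.le
  have hns : ‖s1star‖ = s0star := by
    nlinarith [norm_nonneg s1star, norm_nonneg z1star]
  have hnz : ‖z1star‖ = z0star := by
    nlinarith [norm_nonneg s1star, norm_nonneg z1star]
  -- anti-parallel
  have hzero : z0star • s1star + s0star • z1star = 0 := by
    have hn : ‖z0star • s1star + s0star • z1star‖ ^ 2 = 0 := by
      rw [norm_add_sq_real, real_inner_smul_left, real_inner_smul_right,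
        norm_smul, norm_smul, hip]
      rw [Real.norm_eq_abs, Real.norm_eq_abs, abs_of_pos hs0, abs_of_pos hz0, hns, hnz]
      ring
    exact norm_eq_zero.mp ((pow_eq_zero_iff (two_ne_zero)).mp hn)
  have hlam_pos : 0 < lam := div_pos hs0 hz0
  have hlam_ne : lam ≠ 0 := ne_of_gt hlam_pos
  have hs1 : lam • z1star = -s1star := by
    have h : lam • (z0star • s1star + s0star • z1star) = 0 := by rw [hzero, smul_zero]
    rw [smul_add, smul_smul, smul_smul, hlamdef] at h
    have h1 : s0star / z0star * z0star = s0star := by field_simp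
    have h2 : s0star / z0star * s0star = s0star * (s0star / z0star) := by ring
    rw [h1, h2, ← smul_smul] at h
    have h3 : s0star • (s1star + (s0star / z0star) • z1star) = 0 := by
      rw [smul_add]; exact h
    have h4 : s1star + (s0star / z0star) • z1star = 0 := by
      have := smul_eq_zero.mp h3
      rcases this with h | h
      · exact absurd h (ne_of_gt hs0)
      · exact h
    rw [hlamdef]
    linear_combination (norm := module) h4
  have hc : c = ((0 : ℝ), (2 : ℝ) • s1star) := by
    show ((s0star, s1star) : ℝ × EuclideanSpace ℝ (Fin p)) - lam • (z0star, z1star) = _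
    rw [Prod.smul_mk, Prod.mk_sub_mk]
    have h1 : s0star - lam • z0star = 0 := by
      rw [smul_eq_mul, hlamdef]; field_simp; ring
    have h2 : s1star - lam • z1star = (2 : ℝ) • s1star := by
      rw [hs1]; module
    rw [h1, h2]
  -- basic facts about s0
  set a : ℝ := Real.sqrt (μ0 + ‖s1star‖ ^ 2) with hadef
  have hs0def : s0 = (a, s1star) := rfl
  have ha2 : a ^ 2 = μ0 + ‖s1star‖ ^ 2 := Real.sq_sqrt (by positivity)
  have halt : ‖s1star‖ < a :=
    (Real.lt_sqrt (norm_nonneg _)).mpr (by nlinarith)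
  have ha_pos : 0 < a := lt_of_le_of_lt (norm_nonneg _) halt
  have hys0 : a ^ 2 - ‖s1star‖ ^ 2 = μ0 := by rw [ha2]; ring
  have hvals0 : socObj p μ0 ((0 : ℝ), (2 : ℝ) • s1star) (a, s1star) =
      ‖s1star‖ ^ 2 + μ0 / 2 - (μ0 / 2) * Real.log μ0 := by
    rw [socObj_eq_mk, hys0, sub_self, norm_zero]
    ring
  have hmin : ∀ s : ℝ × EuclideanSpace ℝ (Fin p), ‖s.2‖ < s.1 →
      socObj p μ0 c s0 ≤ socObj p μ0 c s := by
    intro s hs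
    have hy : 0 < s.1 ^ 2 - ‖s.2‖ ^ 2 := by nlinarith [norm_nonneg s.2]
    rw [hc, hs0def, hvals0, socObj_eq]
    have hgb := gbound μ0 hμ _ hy
    nlinarith [sq_nonneg ‖s.2 - s1star‖]
  have hint : ‖s0.2‖ < s0.1 := halt
  have huniq : ∀ s : ℝ × EuclideanSpace ℝ (Fin p), ‖s.2‖ < s.1 →
      (∀ s' : ℝ × EuclideanSpace ℝ (Fin p), ‖s'.2‖ < s'.1 →
        socObj p μ0 c s ≤ socObj p μ0 c s') → s = s0 := by
    intro s hs hminS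
    have heq : socObj p μ0 c s = socObj p μ0 c s0 :=
      le_antisymm (hminS s0 hint) (hmin s hs)
    have hy : 0 < s.1 ^ 2 - ‖s.2‖ ^ 2 := by nlinarith [norm_nonneg s.2]
    rw [hc, hs0def, hvals0, socObj_eq] at heq
    have hgb := gbound μ0 hμ _ hy
    have hx2 : s.2 = s1star := by
      have h0 : ‖s.2 - s1star‖ ^ 2 ≤ 0 := by linarith
      have := norm_eq_zero.mp (by nlinarith [norm_nonneg (s.2 - s1star)] :
        ‖s.2 - s1star‖ = 0)
      exact sub_eq_zero.mp this
    have hyeq : s.1 ^ 2 - ‖s.2‖ ^ 2 = μ0 := by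
      by_contra hne
      have := gbound_strict μ0 hμ _ hy hne
      nlinarith [sq_nonneg ‖s.2 - s1star‖]
    have h1pos : 0 < s.1 := lt_of_le_of_lt (norm_nonneg _) hs
    have ht : s.1 = a := by
      have hsq : s.1 ^ 2 = μ0 + ‖s1star‖ ^ 2 := by rw [hx2] at hyeq; linarith
      rw [hadef, ← hsq, Real.sqrt_sq h1pos.le]
    rw [hs0def]
    exact Prod.ext ht hx2
  -- z0 facts
  have hz1n : lam * ‖z1star‖ = ‖s1star‖ := by
    have := congrArg norm hs1
    rwa [norm_smul, Real.norm_eq_abs, abs_of_pos hlam_pos, norm_neg] at this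
  have hkey : μ0 / lam ^ 2 + ‖z1star‖ ^ 2 = (lam⁻¹ * a) ^ 2 := by
    have h := ha2
    field_simp
    nlinarith [hz1n]
  have hsqrt : Real.sqrt (μ0 / lam ^ 2 + ‖z1star‖ ^ 2) = lam⁻¹ * a := by
    rw [hkey, Real.sqrt_sq (by positivity)]
  have hz0eq : z0 = ((Real.sqrt (μ0 / lam ^ 2 + ‖z1star‖ ^ 2), z1star) :
      ℝ × EuclideanSpace ℝ (Fin p)) := by
    rw [hz0def, hs0def, hc, Prod.mk_sub_mk, Prod.smul_mk]
    refine Prod.ext ?_ ?_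
    · show lam⁻¹ * (a - 0) = Real.sqrt (μ0 / lam ^ 2 + ‖z1star‖ ^ 2)
      rw [hsqrt, sub_zero]
    · show lam⁻¹ • (s1star - (2:ℝ) • s1star) = z1star
      have h5 : s1star - (2:ℝ) • s1star = lam • z1star := by
        rw [hs1]; module
      rw [h5, smul_smul, inv_mul_cancel₀ hlam_ne, one_smul]
  refine ⟨hc, ⟨hint, hmin⟩, huniq, hz0eq, ?_⟩
  rw [hz0eq, hs0def]
  show a * Real.sqrt (μ0 / lam ^ 2 + ‖z1star‖ ^ 2) + ⟪s1star, z1star⟫ = μ0 / lam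
  rw [hsqrt, hip]
  have h6 : a * (lam⁻¹ * a) = lam⁻¹ * (μ0 + ‖s1star‖ ^ 2) := by rw [← ha2]; ring
  rw [h6, hns, hlamdef]
  field_simp
  ring
end

section
/- Let S* and Z* be n×n real symmetric positive semidefinite matrices with S*Z* = 0 and rank(S*) + rank(Z*) = n, let μ⁰ > 0, and set C = S* − Z*. Let S⁰ be the unique symmetric positive definite solution of S − C − μ⁰S⁻¹ = 0 and Z⁰ = S⁰ − C. Then S⁰ − S* = Z⁰ − Z*, and the operator norm of S⁰ − S* satisfies ‖S⁰ − S*‖ ≤ min{ μ⁰ / minᵢ |dᵢ| , √(μ⁰) }, where d₁, …, dₙ are the (all nonzero) eigenvalues of C. -/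
open Matrix

variable {n : ℕ}

lemma unit_dot (V : Matrix (Fin n) (Fin n) ℝ) (hV : Vᵀ * V = 1) (z : Fin n → ℝ) :
    (V *ᵥ z) ⬝ᵥ (V *ᵥ z) = z ⬝ᵥ z := by
  rw [dotProduct_mulVec, ← mulVec_transpose, mulVec_mulVec, hV, one_mulVec]

lemma sym_dot (A B : Matrix (Fin n) (Fin n) ℝ) (hA : Aᵀ = A) (v w : Fin n → ℝ) :
    (A *ᵥ v) ⬝ᵥ (B *ᵥ w) = v ⬝ᵥ ((A * B) *ᵥ w) := by
  rw [← mulVec_mulVec, dotProduct_mulVec v, ← mulVec_transpose, hA, dotProduct_mulVec]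

lemma norm_conj_diag_le (V : Matrix (Fin n) (Fin n) ℝ)
    (hV1 : Vᵀ * V = 1) (hV2 : V * Vᵀ = 1)
    (lam : Fin n → ℝ) (c : ℝ) (hc : 0 ≤ c) (hlam : ∀ i, |lam i| ≤ c) :
    ‖Matrix.toEuclideanCLM (𝕜 := ℝ) (V * diagonal lam * Vᵀ)‖ ≤ c := by
  apply ContinuousLinearMap.opNorm_le_bound _ hc
  intro x
  set M : Matrix (Fin n) (Fin n) ℝ := V * diagonal lam * Vᵀ with hM
  set u : Fin n → ℝ := (WithLp.equiv 2 (Fin n → ℝ)) x with hu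
  have happ : (WithLp.equiv 2 (Fin n → ℝ)) (Matrix.toEuclideanCLM (𝕜 := ℝ) M x) = M *ᵥ u :=
    ofLp_toEuclideanCLM M x
  have hMu : M *ᵥ u = V *ᵥ (diagonal lam *ᵥ (Vᵀ *ᵥ u)) := by
    simp [hM, ← mulVec_mulVec]
  set w : Fin n → ℝ := Vᵀ *ᵥ u with hw
  have key : (M *ᵥ u) ⬝ᵥ (M *ᵥ u) ≤ c ^ 2 * (u ⬝ᵥ u) := by
    rw [hMu, unit_dot V hV1]
    have h1 : (diagonal lam *ᵥ w) ⬝ᵥ (diagonal lam *ᵥ w) ≤ c ^ 2 * (w ⬝ᵥ w) := by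
      simp only [dotProduct, mulVec_diagonal, Finset.mul_sum]
      apply Finset.sum_le_sum
      intro i _
      have h2 : (lam i)^2 ≤ c^2 := by
        have := hlam i
        nlinarith [abs_nonneg (lam i), sq_abs (lam i)]
      nlinarith [sq_nonneg (w i)]
    have h3 : w ⬝ᵥ w = u ⬝ᵥ u :=
      unit_dot Vᵀ (by rw [transpose_transpose]; exact hV2) u
    rw [← h3]; exact h1
  have hxnorm : ‖x‖ ^ 2 = u ⬝ᵥ u := by
    rw [EuclideanSpace.norm_eq, Real.sq_sqrt (by positivity)]
    simp [dotProduct, hu, sq, Real.norm_eq_abs, abs_mul_self]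
  have hTx : ‖(Matrix.toEuclideanCLM (𝕜 := ℝ) M) x‖ ^ 2 = (M *ᵥ u) ⬝ᵥ (M *ᵥ u) := by
    rw [EuclideanSpace.norm_eq, Real.sq_sqrt (by positivity)]
    have : ∀ i, (Matrix.toEuclideanCLM (𝕜 := ℝ) M x) i = (M *ᵥ u) i := fun i =>
      congrFun happ i
    simp only [Real.norm_eq_abs, sq_abs]
    simp [dotProduct, this, sq]
  have : ‖(Matrix.toEuclideanCLM (𝕜 := ℝ) M) x‖ ^ 2 ≤ (c * ‖x‖) ^ 2 := by
    rw [hTx, mul_pow, hxnorm]; exact key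
  have h0 : 0 ≤ c * ‖x‖ := by positivity
  nlinarith [norm_nonneg ((Matrix.toEuclideanCLM (𝕜 := ℝ) M) x)]

lemma scal_bound (μ m d : ℝ) (hμ : 0 < μ) (hm : 0 < m) (hmd : m ≤ |d|) :
    |(Real.sqrt (d ^ 2 + 4 * μ) - |d|) / 2| ≤ min (μ / m) (Real.sqrt μ) := by
  have hd : 0 < |d| := lt_of_lt_of_le hm hmd
  have hs : |d| ≤ Real.sqrt (d ^ 2 + 4 * μ) := by
    rw [← Real.sqrt_sq_eq_abs]
    exact Real.sqrt_le_sqrt (by nlinarith)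
  have habs : |(Real.sqrt (d ^ 2 + 4 * μ) - |d|) / 2| = (Real.sqrt (d ^ 2 + 4 * μ) - |d|) / 2 := by
    rw [abs_of_nonneg]; linarith
  rw [habs, le_min_iff]
  constructor
  · set t : ℝ := 2 * μ / |d| with hure
    have ht : |d| * t = 2 * μ := by rw [hure]; field_simp
    have ht0 : 0 ≤ t := by positivity
    have h1 : Real.sqrt (d ^ 2 + 4 * μ) ≤ |d| + t := by
      rw [← Real.sqrt_sq (by positivity : (0:ℝ) ≤ |d| + t)]
      apply Real.sqrt_le_sqrt
      nlinarith [sq_nonneg t, sq_abs d]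
    have ht2 : t / 2 = μ / |d| := by rw [hure]; ring
    have h2 : (Real.sqrt (d ^ 2 + 4 * μ) - |d|) / 2 ≤ μ / |d| := by
      rw [← ht2]; linarith
    exact h2.trans (div_le_div_of_nonneg_left hμ.le hm hmd)
  · have h1 : Real.sqrt (d ^ 2 + 4 * μ) ≤ |d| + 2 * Real.sqrt μ := by
      rw [← Real.sqrt_sq (by positivity : (0:ℝ) ≤ |d| + 2 * Real.sqrt μ)]
      apply Real.sqrt_le_sqrt
      nlinarith [Real.sqrt_nonneg μ, Real.sq_sqrt hμ.le, sq_abs d, abs_nonneg d]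
    linarith

lemma posdef_smul {n : ℕ} {A : Matrix (Fin n) (Fin n) ℝ} (hA : A.PosDef) {c : ℝ} (hc : 0 < c) :
    (c • A).PosDef := by
  refine posDef_iff_dotProduct_mulVec.mpr ⟨?_, fun x hx => ?_⟩
  · have hAt : Aᵀ = A := by rw [← conjTranspose_eq_transpose_of_trivial]; exact hA.1
    simp [Matrix.IsHermitian, conjTranspose_smul, hAt]
  · rw [smul_mulVec, dotProduct_smul, smul_eq_mul]
    exact mul_pos hc (hA.dotProduct_mulVec_pos hx)

open scoped MatrixOrder in
lemma psd_eq_of_sq {A B : Matrix (Fin n) (Fin n) ℝ} (hA : A.PosSemidef) (hB : B.PosSemidef)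
    (h : A ^ 2 = B ^ 2) : A = B :=
  (CFC.sq_eq_sq_iff A B hA.nonneg hB.nonneg).mp h

/-- Let `S*`, `Z*` be real symmetric positive semidefinite `n×n` matrices with
`S*Z* = 0` and `rank S* + rank Z* = n`, let `μ⁰ > 0`, and set `C = S* − Z*`
(a symmetric, hence Hermitian, matrix with all eigenvalues `dᵢ` nonzero). Let `S⁰`
be the (unique) symmetric positive definite solution of `S − C − μ⁰S⁻¹ = 0` and
`Z⁰ = S⁰ − C`. Then `S⁰ − S* = Z⁰ − Z*` and the spectral (operator 2-) norm of
`S⁰ − S*` satisfies `‖S⁰ − S*‖ ≤ min{μ⁰ / minᵢ|dᵢ|, √μ⁰}`. The spectral norm is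
expressed as the operator norm of the associated continuous linear map on
Euclidean space. -/
theorem stmt12 (n : ℕ) (hne : (Finset.univ : Finset (Fin n)).Nonempty)
    (μ0 : ℝ) (hμ : 0 < μ0)
    (Sstar Zstar : Matrix (Fin n) (Fin n) ℝ)
    (hS : Sstar.PosSemidef) (hZ : Zstar.PosSemidef) (hSZ : Sstar * Zstar = 0)
    (hrank : Sstar.rank + Zstar.rank = n)
    (C : Matrix (Fin n) (Fin n) ℝ) (hCdef : C = Sstar - Zstar)
    (hCherm : C.IsHermitian)
    (S0 : Matrix (Fin n) (Fin n) ℝ) (hS0s : S0.IsSymm) (hS0pd : S0.PosDef)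
    (heq : S0 - C - μ0 • S0⁻¹ = 0) :
    let Z0 : Matrix (Fin n) (Fin n) ℝ := S0 - C
    S0 - Sstar = Z0 - Zstar ∧
    ‖Matrix.toEuclideanCLM (𝕜 := ℝ) (S0 - Sstar)‖ ≤
      min (μ0 / Finset.univ.inf' hne fun i => |hCherm.eigenvalues i|)
        (Real.sqrt μ0) := by
  intro Z0
  constructor
  · show S0 - Sstar = (S0 - C) - Zstar
    rw [hCdef]; abel
  · set U : Matrix (Fin n) (Fin n) ℝ := (hCherm.eigenvectorUnitary : Matrix (Fin n) (Fin n) ℝ)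
      with hUdef
    set d : Fin n → ℝ := hCherm.eigenvalues with hd
    have hsymS : Sstarᵀ = Sstar := by
      rw [← conjTranspose_eq_transpose_of_trivial]; exact hS.1
    have hsymZ : Zstarᵀ = Zstar := by
      rw [← conjTranspose_eq_transpose_of_trivial]; exact hZ.1
    have hZS : Zstar * Sstar = 0 := by
      have h := congrArg conjTranspose hSZ
      simpa [conjTranspose_mul, conjTranspose_eq_transpose_of_trivial, hsymS, hsymZ] using h
    -- invertibility of C
    have hdet : det C ≠ 0 := by
      intro h0
      obtain ⟨v, hv0, hv⟩ := (Matrix.exists_mulVec_eq_zero_iff).mpr h0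
      have hSv : Sstar *ᵥ v = Zstar *ᵥ v := by
        have h1 : (Sstar - Zstar) *ᵥ v = 0 := by rw [← hCdef]; exact hv
        rw [sub_mulVec, sub_eq_zero] at h1; exact h1
      have hw : (Sstar *ᵥ v) ⬝ᵥ (Zstar *ᵥ v) = 0 := by
        rw [sym_dot _ _ hsymS, hSZ, zero_mulVec, dotProduct_zero]
      have hZv : Zstar *ᵥ v = 0 := by
        rw [hSv] at hw; exact dotProduct_self_eq_zero.mp hw
      have hSv0 : Sstar *ᵥ v = 0 := by rw [hSv]; exact hZv
      have hle : LinearMap.range Zstar.mulVecLin ≤ LinearMap.ker Sstar.mulVecLin := by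
        rintro x ⟨y, rfl⟩
        show Sstar *ᵥ (Zstar *ᵥ y) = 0
        rw [mulVec_mulVec, hSZ, zero_mulVec]
      have hdim : Module.finrank ℝ (LinearMap.range Zstar.mulVecLin)
          = Module.finrank ℝ (LinearMap.ker Sstar.mulVecLin) := by
        have h1 := LinearMap.finrank_range_add_finrank_ker Sstar.mulVecLin
        have h2 : Module.finrank ℝ (Fin n → ℝ) = n := by simp
        have h3 : Sstar.rank = Module.finrank ℝ (LinearMap.range Sstar.mulVecLin) := rfl
        have h4 : Zstar.rank = Module.finrank ℝ (LinearMap.range Zstar.mulVecLin) := rfl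
        omega
      have hrange : LinearMap.range Zstar.mulVecLin = LinearMap.ker Sstar.mulVecLin :=
        Submodule.eq_of_le_of_finrank_eq hle hdim
      have hmem : v ∈ LinearMap.range Zstar.mulVecLin := by
        rw [hrange]; exact LinearMap.mem_ker.mpr hSv0
      obtain ⟨y, hy⟩ := hmem
      have hy' : Zstar *ᵥ y = v := hy
      have hvv : v ⬝ᵥ v = 0 := by
        rw [← hy', sym_dot _ _ hsymZ, ← mulVec_mulVec, hy', hZv, dotProduct_zero]
      exact hv0 (dotProduct_self_eq_zero.mp hvv)
    have hdne : ∀ i, d i ≠ 0 := by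
      intro i hi
      apply hdet
      rw [hCherm.det_eq_prod_eigenvalues]
      exact Finset.prod_eq_zero (Finset.mem_univ i) (by exact_mod_cast hi)
    set m := (Finset.univ.inf' hne fun i => |d i|) with hmdef
    have hm0 : 0 < m := by
      rw [hmdef, Finset.lt_inf'_iff]
      exact fun i _ => abs_pos.mpr (hdne i)
    -- unitary facts
    have hV1 : Uᵀ * U = 1 := by
      have h := hCherm.eigenvectorUnitary.2.1
      rwa [star_eq_conjTranspose, conjTranspose_eq_transpose_of_trivial] at h
    have hV2 : U * Uᵀ = 1 := by
      have h := hCherm.eigenvectorUnitary.2.2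
      rwa [star_eq_conjTranspose, conjTranspose_eq_transpose_of_trivial] at h
    have hspec : C = U * diagonal d * Uᵀ := by
      have h := hCherm.spectral_theorem
      rwa [Unitary.conjStarAlgAut_apply, star_eq_conjTranspose, conjTranspose_eq_transpose_of_trivial,
        RCLike.ofReal_real_eq_id, Function.id_comp] at h
    have hDmul : ∀ f g : Fin n → ℝ, (U * diagonal f * Uᵀ) * (U * diagonal g * Uᵀ)
        = U * diagonal (fun i => f i * g i) * Uᵀ := by
      intro f g
      have h1 : Uᵀ * (U * (diagonal g * Uᵀ)) = diagonal g * Uᵀ := by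
        rw [← mul_assoc, hV1, one_mul]
      calc (U * diagonal f * Uᵀ) * (U * diagonal g * Uᵀ)
          = U * (diagonal f * (Uᵀ * (U * (diagonal g * Uᵀ)))) := by
            simp only [mul_assoc]
        _ = U * (diagonal f * (diagonal g * Uᵀ)) := by rw [h1]
        _ = U * diagonal (fun i => f i * g i) * Uᵀ := by
            rw [← mul_assoc (diagonal f), diagonal_mul_diagonal]
            simp only [mul_assoc]
    have hDpsd : ∀ f : Fin n → ℝ, (∀ i, 0 ≤ f i) → (U * diagonal f * Uᵀ).PosSemidef := by
      intro f hf
      have h := (posSemidef_diagonal_iff.mpr hf).mul_mul_conjTranspose_same U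
      rwa [conjTranspose_eq_transpose_of_trivial] at h
    have hC2 : C * C = U * diagonal (fun i => d i * d i) * Uᵀ := by
      rw [hspec, hDmul]
    -- N part
    set N := Sstar + Zstar with hNdef
    have hNpsd : N.PosSemidef := hS.add hZ
    set Nt := U * diagonal (fun i => |d i|) * Uᵀ with hNtdef
    have hNtpsd : Nt.PosSemidef := hDpsd _ (fun i => abs_nonneg _)
    have hNsq : N ^ 2 = Nt ^ 2 := by
      rw [pow_two, pow_two, hNtdef, hDmul]
      have h1 : N * N = C * C := by
        rw [hNdef, hCdef]
        simp only [add_mul, mul_add, sub_mul, mul_sub, hSZ, hZS]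
        abel
      rw [h1, hC2]
      have h2 : (fun i => |d i| * |d i|) = fun i => d i * d i :=
        funext fun i => abs_mul_abs_self _
      rw [h2]
    have hNeq : N = Nt := psd_eq_of_sq hNpsd hNtpsd hNsq
    -- M part
    have hdetS0 : IsUnit S0.det := hS0pd.det_pos.ne'.isUnit
    have hinv : S0 * S0⁻¹ = 1 := mul_nonsing_inv _ hdetS0
    have hinv' : S0⁻¹ * S0 = 1 := nonsing_inv_mul _ hdetS0
    have hX : μ0 • S0⁻¹ = S0 - C := (sub_eq_zero.mp heq).symm
    have hCs : C = S0 - μ0 • S0⁻¹ := by rw [hX]; abel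
    set M0 := S0 + μ0 • S0⁻¹ with hM0def
    have hM0psd : M0.PosSemidef := (hS0pd.add (posdef_smul hS0pd.inv hμ)).posSemidef
    set Mt := U * diagonal (fun i => Real.sqrt (d i ^ 2 + 4 * μ0)) * Uᵀ with hMtdef
    have hMtpsd : Mt.PosSemidef := hDpsd _ (fun i => Real.sqrt_nonneg _)
    have hMsq : M0 ^ 2 = Mt ^ 2 := by
      rw [pow_two, pow_two, hMtdef, hDmul]
      have h2 : (fun i => Real.sqrt (d i ^ 2 + 4 * μ0) * Real.sqrt (d i ^ 2 + 4 * μ0))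
          = fun i => d i * d i + 4 * μ0 := by
        funext i
        rw [Real.mul_self_sqrt (by positivity)]
        ring
      rw [h2]
      have h3 : U * diagonal (fun i => d i * d i + 4 * μ0) * Uᵀ
          = C * C + (4 * μ0) • 1 := by
        have h4 : diagonal (fun i => d i * d i + 4 * μ0)
            = diagonal (fun i => d i * d i) + (4 * μ0) • 1 := by
          rw [smul_one_eq_diagonal, ← diagonal_add]
        rw [h4, mul_add, add_mul, hC2, mul_smul_comm, smul_mul_assoc, mul_one, hV2]
      rw [h3]
      have h5 : M0 * M0 = C * C + (4 * μ0) • 1 := by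
        rw [hM0def, hCs]
        simp only [add_mul, mul_add, sub_mul, mul_sub, smul_mul_assoc, mul_smul_comm,
          hinv, hinv', smul_smul]
        module
      rw [h5]
    have hMeq : M0 = Mt := psd_eq_of_sq hM0psd hMtpsd hMsq
    -- difference
    set lam : Fin n → ℝ := fun i => (Real.sqrt (d i ^ 2 + 4 * μ0) - |d i|) / 2 with hlamdef
    have hdiff : S0 - Sstar = U * diagonal lam * Uᵀ := by
      have h2 : (2:ℝ) • (S0 - Sstar) = M0 - N := by
        rw [hM0def, hX, hCdef, hNdef]
        module
      have h3 : M0 - N = (2:ℝ) • (U * diagonal lam * Uᵀ) := by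
        rw [hMeq, hNeq, hMtdef, hNtdef]
        have h4 : (2:ℝ) • (U * diagonal lam * Uᵀ) = U * diagonal (fun i => 2 * lam i) * Uᵀ := by
          rw [← smul_mul_assoc, ← mul_smul_comm, ← diagonal_smul]
          congr 2
        rw [h4, ← sub_mul, ← mul_sub, diagonal_sub]
        have h5 : (fun i => Real.sqrt (d i ^ 2 + 4 * μ0) - |d i|) = fun i => 2 * lam i := by
          funext i
          rw [hlamdef]
          ring
        rw [h5]
      have h6 : (2:ℝ) • (S0 - Sstar) = (2:ℝ) • (U * diagonal lam * Uᵀ) := by rw [h2, h3]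
      exact smul_right_injective _ (two_ne_zero) h6
    rw [hdiff]
    apply norm_conj_diag_le U hV1 hV2 lam _
      (le_min (by positivity) (Real.sqrt_nonneg _))
    intro i
    have hb := scal_bound μ0 m (d i) hμ hm0 (Finset.inf'_le _ (Finset.mem_univ i))
    exact hb
end

section
/- Consider the residual map R(x, s, z) = (Px + Aᵀz + q, −Ax + b − s) with P ∈ ℝ^{n×n} symmetric positive semidefinite, A ∈ ℝ^{m×n}, q ∈ ℝⁿ, b ∈ ℝᵐ. Let x* ∈ ℝⁿ and s*, z* ∈ ℝᵐ satisfy s* ≥ 0, z* ≥ 0, ⟨s*, z*⟩ = 0, and for every i ∈ {1,…,m} at least one of sᵢ*, zᵢ* is nonzero. Set μ⁰ = ‖R(x*, s*, z*)‖_∞ and assume μ⁰ > 0. Let c = s* − z*, let s⁰ be given componentwise by s⁰ᵢ = (cᵢ + √(cᵢ² + 4μ⁰))/2, let z⁰ = s⁰ − c, and x⁰ = x*. Then ‖R(x⁰, s⁰, z⁰)‖_∞ ≤ (1 + (‖Aᵀ‖_∞ + 1)/minᵢ |cᵢ|) · μ⁰, where ‖Aᵀ‖_∞ is the operator ∞-norm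 of Aᵀ (the maximum absolute column sum of A) and ‖·‖_∞ on residuals is the maximum absolute entry of the concatenated vector. -/
open Matrix

/-- The residual map `R(x, s, z) = (Px + Aᵀz + q, −Ax + b − s)` of the primal-dual
pair of conic programs. -/
def resMap (n m : ℕ) (P : Matrix (Fin n) (Fin n) ℝ) (A : Matrix (Fin m) (Fin n) ℝ)
    (q : Fin n → ℝ) (b : Fin m → ℝ) (x : Fin n → ℝ) (s z : Fin m → ℝ) :
    (Fin n → ℝ) × (Fin m → ℝ) :=
  (P.mulVec x + Aᵀ.mulVec z + q, -(A.mulVec x) + b - s)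

/-- Theorem 2 for the nonnegative cone: given a complementary, componentwise
nondegenerate pair `(s*, z*) ≥ 0` and `μ⁰ = ‖R(x*, s*, z*)‖_∞ > 0`, the warmstart
`s⁰ᵢ = (cᵢ + √(cᵢ² + 4μ⁰))/2`, `z⁰ = s⁰ − c` (with `c = s* − z*`), `x⁰ = x*`
satisfies `‖R(x⁰, s⁰, z⁰)‖_∞ ≤ (1 + (‖Aᵀ‖_∞ + 1)/minᵢ|cᵢ|)·μ⁰`, where `‖Aᵀ‖_∞`
is the maximum absolute column sum of `A`, and the `∞`-norm of a residual is the
maximum absolute entry of the concatenated vector (the `max` of the sup norms of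
the two blocks). -/
theorem stmt13 (n m : ℕ) (hnn : (Finset.univ : Finset (Fin n)).Nonempty)
    (hmm : (Finset.univ : Finset (Fin m)).Nonempty)
    (P : Matrix (Fin n) (Fin n) ℝ) (hP : P.PosSemidef)
    (A : Matrix (Fin m) (Fin n) ℝ) (q : Fin n → ℝ) (b : Fin m → ℝ)
    (xstar : Fin n → ℝ) (sstar zstar : Fin m → ℝ)
    (hs : ∀ i, 0 ≤ sstar i) (hz : ∀ i, 0 ≤ zstar i)
    (hcomp : ∑ i, sstar i * zstar i = 0)
    (hnd : ∀ i, sstar i ≠ 0 ∨ zstar i ≠ 0) :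
    let Rstar := resMap n m P A q b xstar sstar zstar
    let μ0 : ℝ := max ‖Rstar.1‖ ‖Rstar.2‖
    let c : Fin m → ℝ := sstar - zstar
    let s0 : Fin m → ℝ := fun i => (c i + Real.sqrt ((c i) ^ 2 + 4 * μ0)) / 2
    let z0 : Fin m → ℝ := s0 - c
    let R0 := resMap n m P A q b xstar s0 z0
    0 < μ0 →
    max ‖R0.1‖ ‖R0.2‖ ≤
      (1 + ((Finset.univ.sup' hnn fun j => ∑ i, |A i j|) + 1) /
        (Finset.univ.inf' hmm fun i => |c i|)) * μ0 := by
  intro Rstar μ0 c s0 z0 R0 hμ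
  have hc : ∀ i, c i = sstar i - zstar i := fun i => rfl
  -- componentwise complementarity
  have hterm : ∀ i, sstar i * zstar i = 0 := fun i =>
    (Finset.sum_eq_zero_iff_of_nonneg (fun i _ => mul_nonneg (hs i) (hz i))).mp hcomp i
      (Finset.mem_univ i)
  have habs : ∀ i, |c i| = sstar i + zstar i := by
    intro i
    rcases mul_eq_zero.mp (hterm i) with h | h
    · rw [hc, h, zero_sub, abs_neg, abs_of_nonneg (hz i), zero_add]
    · rw [hc, h, sub_zero, abs_of_nonneg (hs i), add_zero]
  have hcne : ∀ i, c i ≠ 0 := by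
    intro i h
    rcases hnd i with h1 | h1 <;> rcases mul_eq_zero.mp (hterm i) with h2 | h2
    · exact h1 h2
    · rw [hc, h2, sub_zero] at h; exact h1 h
    · rw [hc, h2, zero_sub, neg_eq_zero] at h
      rcases hnd i with h3 | h3
      · exact h3 h2
      · exact h3 h
    · exact h1 h2
  set K := Finset.univ.sup' hnn fun j => ∑ i, |A i j| with hK
  set cm := Finset.univ.inf' hmm fun i => |c i| with hcm
  have hcm0 : 0 < cm := by
    rw [hcm, Finset.lt_inf'_iff]
    exact fun i _ => abs_pos.mpr (hcne i)
  have hKle : ∀ j, (∑ i, |A i j|) ≤ K := by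
    intro j; rw [hK]; exact Finset.le_sup' (fun j => ∑ i, |A i j|) (Finset.mem_univ j)
  have hK0 : 0 ≤ K := by
    obtain ⟨j, hj⟩ := hnn
    exact le_trans (Finset.sum_nonneg fun i _ => abs_nonneg _) (hKle j)
  -- the shift d
  set d : Fin m → ℝ := fun i => (Real.sqrt ((c i) ^ 2 + 4 * μ0) - |c i|) / 2 with hd
  have hd0 : ∀ i, 0 ≤ d i := by
    intro i
    have h1 : |c i| ≤ Real.sqrt ((c i) ^ 2 + 4 * μ0) := by
      rw [← Real.sqrt_sq_eq_abs]
      exact Real.sqrt_le_sqrt (by nlinarith)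
    simp only [hd]
    linarith
  have hd1 : ∀ i, d i ≤ μ0 / cm := by
    intro i
    have hci : 0 < |c i| := abs_pos.mpr (hcne i)
    have hcan : μ0 / |c i| * |c i| = μ0 := div_mul_cancel₀ _ (ne_of_gt hci)
    have h1 : Real.sqrt ((c i) ^ 2 + 4 * μ0) ≤ |c i| + 2 * (μ0 / |c i|) := by
      rw [show |c i| + 2 * (μ0 / |c i|) =
          Real.sqrt ((|c i| + 2 * (μ0 / |c i|)) ^ 2) from
        (Real.sqrt_sq (by positivity)).symm]
      apply Real.sqrt_le_sqrt
      have hsq : |c i| ^ 2 = (c i) ^ 2 := sq_abs _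
      nlinarith [sq_nonneg (μ0 / |c i|)]
    have h2 : d i ≤ μ0 / |c i| := by simp only [hd]; linarith
    have h3 : μ0 / |c i| ≤ μ0 / cm := by
      gcongr
      exact Finset.inf'_le _ (Finset.mem_univ i)
    linarith
  have hds : s0 = sstar + d := by
    funext i
    have := habs i
    show (c i + Real.sqrt ((c i) ^ 2 + 4 * μ0)) / 2 = sstar i + d i
    simp only [hd]
    rw [hc] at *
    linarith
  have hdz : z0 = zstar + d := by
    funext i
    have := habs i
    show (c i + Real.sqrt ((c i) ^ 2 + 4 * μ0)) / 2 - c i = zstar i + d i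
    simp only [hd]
    rw [hc] at *
    linarith
  -- residual identities
  have hR01 : R0.1 = Rstar.1 + Aᵀ.mulVec d := by
    show P.mulVec xstar + Aᵀ.mulVec z0 + q = _
    rw [hdz, Matrix.mulVec_add]
    show _ = P.mulVec xstar + Aᵀ.mulVec zstar + q + Aᵀ.mulVec d
    abel
  have hR02 : R0.2 = Rstar.2 - d := by
    show -(A.mulVec xstar) + b - s0 = -(A.mulVec xstar) + b - sstar - d
    rw [hds]
    abel
  -- RHS nonneg
  have htnn : 0 ≤ μ0 / cm := le_of_lt (div_pos hμ hcm0)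
  have hRHS : 0 ≤ (1 + (K + 1) / cm) * μ0 := by
    have : 0 ≤ (K + 1) / cm := div_nonneg (by linarith) hcm0.le
    nlinarith
  apply max_le
  · rw [pi_norm_le_iff_of_nonneg hRHS]
    intro j
    rw [hR01]
    have h1 : ‖Rstar.1 j‖ ≤ μ0 := le_trans (norm_le_pi_norm _ j) (le_max_left _ _)
    have h2 : |Aᵀ.mulVec d j| ≤ K * (μ0 / cm) := by
      rw [Matrix.mulVec, dotProduct]
      calc |∑ i, Aᵀ j i * d i| ≤ ∑ i, |A i j| * d i := by
            refine le_trans (Finset.abs_sum_le_sum_abs _ _) (le_of_eq ?_)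
            refine Finset.sum_congr rfl fun i _ => ?_
            rw [abs_mul, abs_of_nonneg (hd0 i)]; rfl
        _ ≤ ∑ i, |A i j| * (μ0 / cm) := by
            refine Finset.sum_le_sum fun i _ => ?_
            exact mul_le_mul_of_nonneg_left (hd1 i) (abs_nonneg _)
        _ = (∑ i, |A i j|) * (μ0 / cm) := by rw [Finset.sum_mul]
        _ ≤ K * (μ0 / cm) := mul_le_mul_of_nonneg_right (hKle j) htnn
    have h3 : ‖(Rstar.1 + Aᵀ.mulVec d) j‖ ≤ ‖Rstar.1 j‖ + |Aᵀ.mulVec d j| := by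
      rw [Pi.add_apply, Real.norm_eq_abs, Real.norm_eq_abs]
      exact abs_add_le _ _
    have h4 : (1 + (K + 1) / cm) * μ0 = μ0 + (K + 1) * (μ0 / cm) := by ring
    rw [h4]
    nlinarith
  · rw [pi_norm_le_iff_of_nonneg hRHS]
    intro j
    rw [hR02]
    have h1 : ‖Rstar.2 j‖ ≤ μ0 := le_trans (norm_le_pi_norm _ j) (le_max_right _ _)
    have h3 : ‖(Rstar.2 - d) j‖ ≤ ‖Rstar.2 j‖ + |d j| := by
      rw [Pi.sub_apply, Real.norm_eq_abs, Real.norm_eq_abs]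
      exact abs_sub _ _
    have h5 : |d j| ≤ μ0 / cm := by
      rw [abs_of_nonneg (hd0 j)]; exact hd1 j
    have h4 : (1 + (K + 1) / cm) * μ0 = μ0 + (K + 1) * (μ0 / cm) := by ring
    rw [h4]
    nlinarith
end
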